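/- arXiv:0811.1570 — 5 statements merged into one kernel-verified Lean document; each statement's English description precedes it below -/
import Mathlib

section
/- Euclidean construction of subsystem codes: Let q be a prime power and let C be a k'-dimensional F_q-linear code of length n whose subcode D = C ∩ C^⊥ has dimension k'', where k' + k'' < n. Then there exists an F_q-linear [[n, n−(k'+k''), k'−k'', d]]_q Clifford subsystem code, where d = wt(D^⊥ \ C) is the minimum Hamming weight of a vector lying in D^⊥ but not in C. -/
open Finset

/-- Symplectic weight of a vector `(a|b) ∈ F_q^n × F_q^n`. -/
noncomputable def swt {F : Type} [Field F] {n : ℕ} (v : (Fin n → F) × (Fin n → F)) : ℕ :=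
  {i : Fin n | ¬(v.1 i = 0 ∧ v.2 i = 0)}.ncard

/-- Minimum symplectic weight of a nonzero element of a set. -/
noncomputable def minSwt {F : Type} [Field F] {n : ℕ} (S : Set ((Fin n → F) × (Fin n → F))) : ℕ :=
  sInf (swt '' (S \ {0}))

/-- The trace-symplectic form on `F_q^{2n}`. -/
noncomputable def trSympForm (p : ℕ) {F : Type} [Field F] [Fintype F] [CharP F p] {n : ℕ}
    (u v : (Fin n → F) × (Fin n → F)) : ZMod p :=
  letI := ZMod.algebra F p
  Algebra.trace (ZMod p) F (∑ i, (v.1 i * u.2 i - u.1 i * v.2 i))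

/-- The trace-symplectic dual of a set of vectors in `F_q^{2n}`. -/
def sympDual (p : ℕ) {F : Type} [Field F] [Fintype F] [CharP F p] {n : ℕ}
    (C : Set ((Fin n → F) × (Fin n → F))) : Set ((Fin n → F) × (Fin n → F)) :=
  {v | ∀ w ∈ C, trSympForm p v w = 0}

/-- `C` (an additive code in `F_q^{2n}`) defines an `((n,K,R,d))_q` Clifford subsystem code. -/
def IsSubsysCode (p : ℕ) {F : Type} [Field F] [Fintype F] [CharP F p] {n : ℕ}
    (C : AddSubgroup ((Fin n → F) × (Fin n → F))) (K R d : ℕ) : Prop :=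
  let Ds : Set ((Fin n → F) × (Fin n → F)) := ↑C ∩ sympDual p ↑C
  Nat.card Ds * (K * R) = Fintype.card F ^ n ∧
  Nat.card C * K = Fintype.card F ^ n * R ∧
  (sympDual p Ds = ↑C → d = minSwt (sympDual p Ds)) ∧
  (sympDual p Ds ≠ ↑C → d = minSwt (sympDual p Ds \ ↑C))

/-- The subsystem code defined by `C` is pure to `d'`. -/
def PureTo {F : Type} [Field F] {n : ℕ}
    (C : AddSubgroup ((Fin n → F) × (Fin n → F))) (d' : ℕ) : Prop :=
  ∀ v ∈ C, v ≠ 0 → d' ≤ swt v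

/-- The subsystem code defined by `C` is `F_q`-linear. -/
def FqLinear {F : Type} [Field F] {n : ℕ}
    (C : AddSubgroup ((Fin n → F) × (Fin n → F))) : Prop :=
  ∀ (a : F), ∀ v ∈ C, a • v ∈ C

/-- Hamming weight.-/
noncomputable def hwt {F : Type} [Field F] {n : ℕ} (v : Fin n → F) : ℕ := {i | v i ≠ 0}.ncard

/-- Minimum Hamming weight of a nonzero element of a set. -/
noncomputable def minHwt {F : Type} [Field F] {n : ℕ} (S : Set (Fin n → F)) : ℕ :=
  sInf (hwt '' (S \ {0}))

/-- Euclidean dual. -/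
def euclDual {F : Type} [Field F] {n : ℕ} (C : Set (Fin n → F)) : Set (Fin n → F) :=
  {x | ∀ y ∈ C, ∑ i, x i * y i = 0}

/-- Hermitian dual (with respect to `x ↦ x^q`). -/
def hermDual (q : ℕ) {K : Type} [Field K] {n : ℕ} (C : Set (Fin n → K)) : Set (Fin n → K) :=
  {x | ∀ y ∈ C, ∑ i, x i ^ q * y i = 0}

/-- Cyclotomic coset of `a` modulo `n` (w.r.t. multiplier `q`). -/
def cycCoset (q n : ℕ) (a : ZMod n) : Set (ZMod n) := {x | ∃ i : ℕ, x = a * (q : ZMod n) ^ i}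


noncomputable def dotB (F : Type) [Field F] (n : ℕ) : LinearMap.BilinForm F (Fin n → F) :=
  LinearMap.mk₂ F (fun x y => ∑ i, x i * y i)
    (fun x x' y => by simp [add_mul, Finset.sum_add_distrib])
    (fun a x y => by simp [Finset.mul_sum, mul_assoc])
    (fun x y y' => by simp [mul_add, Finset.sum_add_distrib])
    (fun a x y => by simp [Finset.mul_sum, mul_left_comm])

lemma dotB_apply {F : Type} [Field F] {n : ℕ} (x y : Fin n → F) :
    dotB F n x y = ∑ i, x i * y i := rfl

lemma dotB_refl {F : Type} [Field F] {n : ℕ} : (dotB F n).IsRefl := by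
  intro x y h
  rw [dotB_apply] at h ⊢
  rw [← h]
  exact Finset.sum_congr rfl fun i _ => mul_comm _ _

lemma dotB_nondeg {F : Type} [Field F] {n : ℕ} : (dotB F n).Nondegenerate := by
  refine ⟨fun x hx => ?_, fun x hx => ?_⟩ <;>
  · funext j
    have := hx (Pi.single j 1)
    simp [dotB_apply, Pi.single_apply, mul_ite, ite_mul] at this
    simpa using this

lemma euclDual_eq_orth {F : Type} [Field F] {n : ℕ} (A : Submodule F (Fin n → F)) :
    euclDual (A : Set (Fin n → F)) = ((dotB F n).orthogonal A : Set (Fin n → F)) := by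
  ext x
  constructor
  · intro hx y hy
    have := hx y hy
    show dotB F n y x = 0
    rw [dotB_apply, ← this]
    exact Finset.sum_congr rfl fun i _ => mul_comm _ _
  · intro hx y hy
    have := hx y hy
    rw [dotB_apply] at this
    rw [← this]
    exact Finset.sum_congr rfl fun i _ => mul_comm _ _

lemma trace_forall_eq_zero (p : ℕ) [Fact p.Prime] {F : Type} [Field F] [Fintype F] [CharP F p]
    (s : F) (h : ∀ α : F, (letI := ZMod.algebra F p; Algebra.trace (ZMod p) F (α * s)) = 0) :
    s = 0 := by
  letI := ZMod.algebra F p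
  haveI : Algebra.IsAlgebraic (ZMod p) F := Algebra.IsAlgebraic.of_finite (ZMod p) F
  have := traceForm_nondegenerate (ZMod p) F
  refine this.1 s fun y => ?_
  have := h y
  rw [Algebra.traceForm_apply, mul_comm]
  exact this


lemma sympDual_prod (p : ℕ) [Fact p.Prime] {F : Type} [Field F] [Fintype F] [CharP F p] {n : ℕ}
    (A : Submodule F (Fin n → F)) :
    sympDual p ((A.prod A : Submodule F ((Fin n → F) × (Fin n → F))) :
        Set ((Fin n → F) × (Fin n → F))) =
      ((((dotB F n).orthogonal A).prod ((dotB F n).orthogonal A) :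
          Submodule F ((Fin n → F) × (Fin n → F))) : Set ((Fin n → F) × (Fin n → F))) := by
  letI := ZMod.algebra F p
  ext u
  constructor
  · intro hu
    have h2 : u.2 ∈ (dotB F n).orthogonal A := by
      intro y hy
      show dotB F n y u.2 = 0
      rw [dotB_apply]
      apply trace_forall_eq_zero p
      intro α
      have h := hu (α • y, 0) (by
        rw [SetLike.mem_coe, Submodule.mem_prod]
        exact ⟨Submodule.smul_mem _ _ hy, Submodule.zero_mem _⟩)
      unfold trSympForm at h
      show Algebra.trace (ZMod p) F (α * ∑ i, y i * u.2 i) = 0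
      rw [← h]
      congr 1
      simp [Finset.mul_sum, mul_assoc]
    have h1 : u.1 ∈ (dotB F n).orthogonal A := by
      intro y hy
      show dotB F n y u.1 = 0
      rw [dotB_apply]
      apply trace_forall_eq_zero p
      intro α
      have h := hu (0, α • y) (by
        rw [SetLike.mem_coe, Submodule.mem_prod]
        exact ⟨Submodule.zero_mem _, Submodule.smul_mem _ _ hy⟩)
      unfold trSympForm at h
      have h' : Algebra.trace (ZMod p) F (∑ i, ((0 : Fin n → F) i * u.2 i
          - u.1 i * (α • y) i)) = 0 := h
      have he : (∑ i, ((0 : Fin n → F) i * u.2 i - u.1 i * (α • y) i))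
          = -(α * ∑ i, y i * u.1 i) := by
        simp [Finset.mul_sum, Finset.sum_sub_distrib]
        refine Finset.sum_congr rfl fun i _ => by ring
      rw [he, map_neg, neg_eq_zero] at h'
      exact h'
    rw [SetLike.mem_coe, Submodule.mem_prod]
    exact ⟨h1, h2⟩
  · intro hu
    rw [SetLike.mem_coe, Submodule.mem_prod] at hu
    intro w hw
    rw [SetLike.mem_coe, Submodule.mem_prod] at hw
    unfold trSympForm
    have e2 : ∑ i, w.1 i * u.2 i = 0 := by
      have : dotB F n w.1 u.2 = 0 := hu.2 w.1 hw.1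
      rwa [dotB_apply] at this
    have e1 : ∑ i, u.1 i * w.2 i = 0 := by
      have : dotB F n w.2 u.1 = 0 := hu.1 w.2 hw.2
      rw [dotB_apply] at this
      rw [← this]
      exact Finset.sum_congr rfl fun i _ => mul_comm _ _
    rw [show (∑ i, (w.1 i * u.2 i - u.1 i * w.2 i))
        = (∑ i, w.1 i * u.2 i) - ∑ i, u.1 i * w.2 i from Finset.sum_sub_distrib _ _,
      e1, e2, sub_zero, map_zero]


def prodSubEquiv {F V W : Type} [Field F] [AddCommGroup V] [Module F V]
    [AddCommGroup W] [Module F W] (A : Submodule F V) (B : Submodule F W) :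
    ↥(A.prod B) ≃ ↥A × ↥B where
  toFun x := (⟨x.1.1, (Submodule.mem_prod.mp x.2).1⟩, ⟨x.1.2, (Submodule.mem_prod.mp x.2).2⟩)
  invFun y := ⟨(y.1.1, y.2.1), Submodule.mem_prod.mpr ⟨y.1.2, y.2.2⟩⟩
  left_inv x := rfl
  right_inv y := rfl

lemma card_sub {F : Type} [Field F] [Fintype F] {n : ℕ} (A : Submodule F (Fin n → F)) :
    Nat.card A = Fintype.card F ^ Module.finrank F A := by
  haveI : Fintype ↥A := Fintype.ofFinite _
  rw [Nat.card_eq_fintype_card]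
  exact Module.card_eq_pow_finrank (K := F)

lemma card_prodsub {F : Type} [Field F] [Fintype F] {n : ℕ} (A : Submodule F (Fin n → F)) :
    Nat.card (↑(A.prod A) : Set ((Fin n → F) × (Fin n → F)))
      = Fintype.card F ^ (2 * Module.finrank F A) := by
  have e1 : Nat.card (↑(A.prod A) : Set ((Fin n → F) × (Fin n → F)))
      = Nat.card (A.prod A) :=
    Nat.card_congr (Equiv.subtypeEquivRight fun x => Iff.rfl)
  rw [e1, Nat.card_congr (prodSubEquiv A A), Nat.card_prod, card_sub, ← pow_add, two_mul]

lemma minSwt_prod {F : Type} [Field F] {n : ℕ} (A C : Submodule F (Fin n → F)) :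
    minSwt ((↑(A.prod A) : Set ((Fin n → F) × (Fin n → F))) \ ↑(C.prod C))
      = minHwt ((↑A : Set (Fin n → F)) \ ↑C) := by
  set S : Set ((Fin n → F) × (Fin n → F)) := ↑(A.prod A) \ ↑(C.prod C) with hS
  set T : Set (Fin n → F) := ↑A \ ↑C with hT
  have h1 : ∀ m ∈ hwt '' (T \ {0}), m ∈ swt '' (S \ {0}) := by
    rintro m ⟨v, ⟨⟨hvA, hvC⟩, hv0⟩, rfl⟩
    refine ⟨(v, 0), ⟨⟨?_, ?_⟩, ?_⟩, ?_⟩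
    · exact SetLike.mem_coe.mpr (Submodule.mem_prod.mpr ⟨hvA, Submodule.zero_mem _⟩)
    · intro hmem
      exact hvC (Submodule.mem_prod.mp (SetLike.mem_coe.mp hmem)).1
    · intro h0
      apply hv0
      simp only [Set.mem_singleton_iff] at h0 ⊢
      exact congrArg Prod.fst h0
    · show swt (v, 0) = hwt v
      unfold swt hwt
      congr 1
      ext i
      simp
  have h2 : ∀ m ∈ swt '' (S \ {0}), ∃ m' ∈ hwt '' (T \ {0}), m' ≤ m := by
    rintro m ⟨u, ⟨⟨huA, huC⟩, _⟩, rfl⟩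
    have huA' := Submodule.mem_prod.mp (SetLike.mem_coe.mp huA)
    have hor : u.1 ∉ C ∨ u.2 ∉ C := by
      by_contra h
      push_neg at h
      exact huC (SetLike.mem_coe.mpr (Submodule.mem_prod.mpr ⟨h.1, h.2⟩))
    rcases hor with h | h
    · refine ⟨hwt u.1, ⟨u.1, ⟨⟨huA'.1, h⟩, fun h0 => h (by
        simp only [Set.mem_singleton_iff] at h0; rw [h0]; exact Submodule.zero_mem _)⟩, rfl⟩, ?_⟩
      unfold hwt swt
      refine Set.ncard_le_ncard (fun i hi => ?_) (Set.toFinite _)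
      intro hc
      exact hi hc.1
    · refine ⟨hwt u.2, ⟨u.2, ⟨⟨huA'.2, h⟩, fun h0 => h (by
        simp only [Set.mem_singleton_iff] at h0; rw [h0]; exact Submodule.zero_mem _)⟩, rfl⟩, ?_⟩
      unfold hwt swt
      refine Set.ncard_le_ncard (fun i hi => ?_) (Set.toFinite _)
      intro hc
      exact hi hc.2
  unfold minSwt minHwt
  rcases Set.eq_empty_or_nonempty (swt '' (S \ {0})) with hSe | hSn
  · have hTe : hwt '' (T \ {0}) = ∅ := by
      rw [Set.eq_empty_iff_forall_notMem]
      intro m hm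
      have := h1 m hm
      rw [hSe] at this
      exact this
    rw [hSe, hTe]
  · apply le_antisymm
    · obtain ⟨m', hm', _⟩ := h2 _ (Nat.sInf_mem hSn)
      have hTn : (hwt '' (T \ {0})).Nonempty := ⟨m', hm'⟩
      exact Nat.sInf_le (h1 _ (Nat.sInf_mem hTn))
    · obtain ⟨m', hm', hle⟩ := h2 _ (Nat.sInf_mem hSn)
      exact le_trans (Nat.sInf_le hm') hle

/-- Euclidean construction of subsystem codes.
If `C` is a `k'`-dimensional `F_q`-linear code of length `n` whose subcode
`D = C ∩ C^⊥` has dimension `k''`, where `k' + k'' < n`, then there exists an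
`F_q`-linear `[[n, n−(k'+k''), k'−k'', d]]_q` Clifford subsystem code, where
`d = wt(D^⊥ \ C)`. -/
theorem euclidean_construction_of_subsystem_codes
    (p : ℕ) (hp : p.Prime) (F : Type) [Field F] [Fintype F] [CharP F p]
    (n k' k'' : ℕ) (C D : Submodule F (Fin n → F))
    (hD : (D : Set (Fin n → F)) = ↑C ∩ euclDual ↑C)
    (hk' : Module.finrank F C = k') (hk'' : Module.finrank F D = k'')
    (hlt : k' + k'' < n) :
    ∃ Q : AddSubgroup ((Fin n → F) × (Fin n → F)),
      IsSubsysCode p Q (Fintype.card F ^ (n - (k' + k'')))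
        (Fintype.card F ^ (k' - k''))
        (minHwt (euclDual (↑D : Set (Fin n → F)) \ ↑C)) ∧
      FqLinear Q := by
  haveI : Fact p.Prime := ⟨hp⟩
  classical
  set q := Fintype.card F with hq
  let orth : Submodule F (Fin n → F) → Submodule F (Fin n → F) := (dotB F n).orthogonal
  have hDC : D ≤ C := by
    intro x hx
    have : x ∈ (D : Set (Fin n → F)) := hx
    rw [hD] at this
    exact this.1
  have hDD : D = C ⊓ orth C := by
    apply SetLike.coe_injective
    rw [hD, euclDual_eq_orth, ← Submodule.coe_inf]
  have hk''k' : k'' ≤ k' := by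
    rw [← hk', ← hk'']
    exact Submodule.finrank_mono hDC
  have hk'n : k' ≤ n := by
    have h := Submodule.finrank_le C
    rwa [hk', Module.finrank_fin_fun] at h
  have horthD : Module.finrank F (orth D) = n - k'' := by
    have := LinearMap.BilinForm.finrank_orthogonal (B := dotB F n) dotB_nondeg D
    rwa [Module.finrank_fin_fun, hk''] at this
  refine ⟨(C.prod C).toAddSubgroup, ?_, ?_⟩
  swap
  · intro a v hv
    exact Submodule.smul_mem _ a hv
  have hQcoe : (((C.prod C).toAddSubgroup : AddSubgroup ((Fin n → F) × (Fin n → F))) :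
      Set ((Fin n → F) × (Fin n → F))) = ↑(C.prod C) := Submodule.coe_toAddSubgroup _
  have hsd : sympDual p (((C.prod C).toAddSubgroup : AddSubgroup _) : Set _)
      = (↑((orth C).prod (orth C)) : Set ((Fin n → F) × (Fin n → F))) := by
    rw [hQcoe, sympDual_prod]
  have hDs : ((((C.prod C).toAddSubgroup : AddSubgroup _) : Set ((Fin n → F) × (Fin n → F)))
      ∩ sympDual p (((C.prod C).toAddSubgroup : AddSubgroup _) : Set _))
      = ↑(D.prod D) := by
    rw [hsd, hQcoe]
    ext u
    simp only [Set.mem_inter_iff, SetLike.mem_coe, Submodule.mem_prod, hDD,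
      Submodule.mem_inf]
    tauto
  have hsdDs : sympDual p ((↑(D.prod D) : Set ((Fin n → F) × (Fin n → F))))
      = ↑((orth D).prod (orth D)) := sympDual_prod p D
  have hne : (↑((orth D).prod (orth D)) : Set ((Fin n → F) × (Fin n → F)))
      ≠ ↑(C.prod C) := by
    intro hEq
    have hle : orth D ≤ C := by
      intro x hx
      have : ((x, 0) : (Fin n → F) × (Fin n → F)) ∈
          (↑((orth D).prod (orth D)) : Set ((Fin n → F) × (Fin n → F))) :=
        SetLike.mem_coe.mpr (Submodule.mem_prod.mpr ⟨hx, Submodule.zero_mem _⟩)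
      rw [hEq] at this
      exact (Submodule.mem_prod.mp (SetLike.mem_coe.mp this)).1
    have : n - k'' ≤ k' := by
      rw [← horthD, ← hk']
      exact Submodule.finrank_mono hle
    omega
  refine ⟨?_, ?_, ?_, ?_⟩
  · show Nat.card (((((C.prod C).toAddSubgroup : AddSubgroup _) : Set _)
        ∩ sympDual p (((C.prod C).toAddSubgroup : AddSubgroup _) : Set _)) :
        Set ((Fin n → F) × (Fin n → F))) * (q ^ (n - (k' + k'')) * q ^ (k' - k'')) = q ^ n
    rw [hDs, card_prodsub, hk'', ← pow_add, ← pow_add]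
    congr 1
    omega
  · show Nat.card ((C.prod C).toAddSubgroup : AddSubgroup _) * q ^ (n - (k' + k''))
        = q ^ n * q ^ (k' - k'')
    have : Nat.card ((C.prod C).toAddSubgroup : AddSubgroup _)
        = Nat.card (↑(C.prod C) : Set ((Fin n → F) × (Fin n → F))) :=
      Nat.card_congr (Equiv.subtypeEquivRight fun x => Iff.rfl)
    rw [this, card_prodsub, hk', ← pow_add, ← pow_add]
    congr 1
    omega
  · intro h
    exfalso
    rw [hDs, hsdDs, hQcoe] at h
    exact hne h
  · intro _
    show minHwt (euclDual (↑D : Set (Fin n → F)) \ ↑C) = _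
    rw [hDs, hsdDs, hQcoe, minSwt_prod, euclDual_eq_orth]
end

section
/- Hermitian construction of subsystem codes: Let q be a prime power and let C be a k'-dimensional F_{q^2}-linear code of length n whose subcode D = C ∩ C^⊥h has dimension k'', where k' + k'' < n. Then there exists an F_q-linear [[n, n−(k'+k''), k'−k'', d]]_q Clifford subsystem code, where d = wt(D^⊥h \ C) is the minimum Hamming weight of a vector lying in D^⊥h but not in C. -/
open Finset

section AuxiliaryLemmas


open Polynomial in
lemma myroots_bound {E : Type} [Field E] (q : ℕ) (hq : 2 ≤ q) (c : E) (hc : c ≠ 0)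
    (A : Set E) (hA : ∀ y ∈ A, y ^ q = c * y) : A.ncard ≤ q := by
  classical
  set P : Polynomial E := X ^ q - C c * X with hP
  have hdegcX : degree (C c * X : Polynomial E) ≤ 1 := by
    calc degree (C c * X : Polynomial E) ≤ degree (C c) + degree (X : Polynomial E) :=
          degree_mul_le _ _
      _ ≤ 0 + 1 := add_le_add degree_C_le degree_X_le
      _ = 1 := by norm_num
    
  have hPm : P.Monic := by
    apply Polynomial.monic_X_pow_sub
    exact lt_of_le_of_lt hdegcX (by exact_mod_cast Nat.one_lt_cast.mpr hq)
  have hP0 : P ≠ 0 := hPm.ne_zero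
  have hdeg : P.natDegree ≤ q := by
    apply (Polynomial.natDegree_sub_le _ _).trans
    have h1 : (C c * X : Polynomial E).natDegree ≤ 1 :=
      natDegree_le_iff_degree_le.mpr (by exact_mod_cast hdegcX)
    simp only [Polynomial.natDegree_X_pow]
    omega
  have hsub : A ⊆ (P.roots.toFinset : Set E) := by
    intro y hy
    simp only [Multiset.mem_toFinset, Finset.mem_coe]
    rw [Polynomial.mem_roots hP0]
    simp [Polynomial.IsRoot, hP, hA y hy]
  calc A.ncard ≤ (↑P.roots.toFinset : Set E).ncard := Set.ncard_le_ncard hsub (Set.toFinite _)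
    _ ≤ q := by
        rw [Set.ncard_coe_finset]
        exact le_trans (Multiset.toFinset_card_le _) (le_trans (Polynomial.card_roots' _) hdeg)

lemma fixed_field_facts {E : Type} [Field E] [Fintype E] (σ : E →+* E) (q : ℕ) (hq : 2 ≤ q)
    (hcard : Fintype.card E = q ^ 2) (hσ : ∀ x, σ x = x ^ q) :
    Set.ncard {x : E | σ x = x} = q ∧ (∀ z : E, z ^ q = -z → ∃ w, w - σ w = z) := by
  classical
  have hσσ : ∀ x : E, σ (σ x) = x := by
    intro x
    rw [hσ, hσ, ← pow_mul, ← sq, ← hcard, FiniteField.pow_card]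
  set f : E →+ E := AddMonoidHom.mk' (fun x => x - σ x) (by
    intro a b; simp only [map_add]; ring) with hf
  have hfa : ∀ x : E, f x = x - σ x := fun _ => rfl
  have hker : ((f.ker : AddSubgroup E) : Set E) = {x : E | σ x = x} := by
    ext x
    simp only [SetLike.mem_coe, AddMonoidHom.mem_ker, hfa, Set.mem_setOf_eq, sub_eq_zero]
    exact eq_comm
  have hrange_sub : ((f.range : AddSubgroup E) : Set E) ⊆ {z : E | z ^ q = -z} := by
    rintro z ⟨x, rfl⟩
    have h1 : (x - σ x) ^ q = σ x - σ (σ x) := by rw [← hσ, map_sub]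
    simp only [Set.mem_setOf_eq, hfa, h1, hσσ]
    ring
  have hkq : Set.ncard {x : E | σ x = x} ≤ q := by
    apply myroots_bound q hq (1 : E) one_ne_zero
    intro y hy
    rw [one_mul, ← hσ]
    exact hy
  have hAq : Set.ncard {z : E | z ^ q = -z} ≤ q := by
    apply myroots_bound q hq (-1 : E) (by simp)
    intro y hy
    simpa using hy
  have hrq : Set.ncard ((f.range : AddSubgroup E) : Set E) ≤ q :=
    le_trans (Set.ncard_le_ncard hrange_sub (Set.toFinite _)) hAq
  have hcards : Nat.card E = Nat.card f.range * Nat.card f.ker := by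
    rw [AddSubgroup.card_eq_card_quotient_mul_card_addSubgroup f.ker]
    congr 1
    exact Nat.card_congr (QuotientAddGroup.quotientKerEquivRange f).toEquiv
  have hkcard : Nat.card f.ker = Set.ncard {x : E | σ x = x} := by
    rw [← hker]; exact Nat.card_coe_set_eq _
  have hrcard : Nat.card f.range = Set.ncard ((f.range : AddSubgroup E) : Set E) :=
    Nat.card_coe_set_eq _
  have hE : Nat.card E = q ^ 2 := by rw [Nat.card_eq_fintype_card, hcard]
  rw [hkcard, hrcard] at hcards
  rw [hE, pow_two] at hcards
  have h1 : Set.ncard {x : E | σ x = x} = q ∧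
      Set.ncard ((f.range : AddSubgroup E) : Set E) = q := by
    set a := Set.ncard ((f.range : AddSubgroup E) : Set E) with ha
    set b := Set.ncard {x : E | σ x = x} with hb
    have hq0 : 0 < q := by omega
    have h2 : q ≤ b := by
      by_contra hcon
      push_neg at hcon
      have : a * b < q * q := by
        calc a * b ≤ q * b := Nat.mul_le_mul_right b hrq
          _ < q * q := (Nat.mul_lt_mul_left hq0).mpr hcon
      rw [← hcards] at this
      exact lt_irrefl _ this
    have h3 : q ≤ a := by
      by_contra hcon
      push_neg at hcon
      have : a * b < q * q := by
        calc a * b ≤ a * q := Nat.mul_le_mul_left a hkq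
          _ < q * q := (Nat.mul_lt_mul_right hq0).mpr hcon
      rw [← hcards] at this
      exact lt_irrefl _ this
    exact ⟨le_antisymm hkq h2, le_antisymm hrq h3⟩
  refine ⟨h1.1, ?_⟩
  have hreq : ((f.range : AddSubgroup E) : Set E) = {z : E | z ^ q = -z} := by
    apply Set.eq_of_subset_of_ncard_le hrange_sub _ (Set.toFinite _)
    rw [h1.2]; exact hAq
  intro z hz
  have : z ∈ ((f.range : AddSubgroup E) : Set E) := by rw [hreq]; exact hz
  obtain ⟨w, hw⟩ := this
  exact ⟨w, hw⟩

set_option maxHeartbeats 1000000 in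
set_option synthInstance.maxHeartbeats 400000 in
lemma exists_good_pair (p : ℕ) [Fact p.Prime]
    (F : Type) [Field F] [Fintype F] [CharP F p]
    (E : Type) [Field E] [Fintype E] [CharP E p]
    (hE : Fintype.card E = Fintype.card F ^ 2) :
    ∃ (σ : E →+* E) (e : E ≃+ F × F) (θ : E →+ F),
      (∀ x : E, σ x = x ^ Fintype.card F) ∧
      (∀ u v : E, (e v).1 * (e u).2 - (e u).1 * (e v).2 = θ (u * v ^ Fintype.card F)) ∧
      (∀ s : E, (∀ γ : E,
          (letI := ZMod.algebra F p; Algebra.trace (ZMod p) F (θ (γ * s))) = 0) → s = 0) ∧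
      (∀ a : F, ∃ c : E, ∀ u : E, e (c * u) = a • e u) := by
  classical
  letI := ZMod.algebra F p
  set q := Fintype.card F with hqdef
  have hq2 : 2 ≤ q := Fintype.one_lt_card
  obtain ⟨m, hpm, hm⟩ := FiniteField.card F p
  obtain ⟨σ, hσ⟩ : ∃ σ : E →+* E, ∀ x : E, σ x = x ^ q :=
    ⟨iterateFrobenius E p (m : ℕ), fun x => by rw [iterateFrobenius_def, hqdef, hm]⟩
  have hσσ : ∀ x : E, σ (σ x) = x := by
    intro x
    rw [hσ, hσ, ← pow_mul, ← sq, ← hE, FiniteField.pow_card]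
  obtain ⟨hcardfix, hsurj⟩ := fixed_field_facts σ q hq2 hE hσ
  -- the fixed subfield
  obtain ⟨F', hmemF'⟩ : ∃ F' : Subfield E, ∀ x : E, x ∈ F' ↔ σ x = x := by
    refine ⟨{ carrier := {x : E | σ x = x}
              mul_mem' := fun {a b} ha hb => by
                simp only [Set.mem_setOf_eq, map_mul] at *; rw [ha, hb]
              one_mem' := map_one σ
              add_mem' := fun {a b} ha hb => by
                simp only [Set.mem_setOf_eq, map_add] at *; rw [ha, hb]
              zero_mem' := map_zero σ
              neg_mem' := fun {a} ha => by
                simp only [Set.mem_setOf_eq, map_neg] at *; rw [ha]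
              inv_mem' := fun a ha => by
                simp only [Set.mem_setOf_eq, map_inv₀] at *; rw [ha] }, fun x => Iff.rfl⟩
  have hfix : ∀ t : F', σ (t : E) = (t : E) := fun t => (hmemF' _).mp t.property
  letI : Fintype F' := Fintype.ofFinite F'
  have hcardF' : Fintype.card F' = Fintype.card F := by
    rw [← Nat.card_eq_fintype_card]
    have h1 : ((F' : Set E)) = {x : E | σ x = x} := by
      ext x; exact hmemF' x
    have h2 : Nat.card F' = Set.ncard (F' : Set E) := Nat.card_coe_set_eq _
    rw [h2, h1, hcardfix]
  obtain ⟨ψ⟩ : Nonempty (F' ≃+* F) := ⟨FiniteField.ringEquivOfCardEq hcardF'⟩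
  -- the generator β
  obtain ⟨g, hg⟩ := IsCyclic.exists_generator (α := Eˣ)
  obtain ⟨β, hβ0, horder⟩ : ∃ β : E, β ≠ 0 ∧ orderOf β = q ^ 2 - 1 := by
    refine ⟨(g : E), g.ne_zero, ?_⟩
    rw [orderOf_units, orderOf_eq_card_of_forall_mem_zpowers hg,
      Nat.card_eq_fintype_card, Fintype.card_units, hE]
  -- independence of β, σ β over the fixed field
  have indep : ∀ a b : E, σ a = a → σ b = b → a * β + b * σ β = 0 → a = 0 ∧ b = 0 := by
    intro a b ha hb heq
    by_cases hbz : b = 0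
    · subst hbz
      simp only [zero_mul, add_zero, mul_eq_zero] at heq
      exact ⟨heq.resolve_right hβ0, rfl⟩
    · exfalso
      set c : E := -a * b⁻¹ with hcdef
      have hc : σ c = c := by rw [hcdef, map_mul, map_neg, map_inv₀, ha, hb]
      have hβq : σ β = c * β := by
        apply mul_left_cancel₀ hbz
        have hstep : b * σ β = -a * β := by linear_combination heq
        rw [hstep, hcdef]
        field_simp
      have hc2 : c ^ 2 = 1 := by
        have h1 : β = c ^ 2 * β := by
          conv_lhs => rw [← hσσ β, hβq, map_mul, hc, hβq]
          ring
        have h2 : (c ^ 2 - 1) * β = 0 := by linear_combination -h1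
        rcases mul_eq_zero.mp h2 with h | h
        · linear_combination h
        · exact absurd h hβ0
      have hpow : β ^ (2 * q - 2) = 1 := by
        have h1 : β ^ (2 * q) = β ^ 2 := by
          have hx : β ^ q = c * β := by rw [← hσ]; exact hβq
          calc β ^ (2 * q) = (β ^ q) ^ 2 := by rw [← pow_mul, mul_comm]
            _ = c ^ 2 * β ^ 2 := by rw [hx]; ring
            _ = β ^ 2 := by rw [hc2, one_mul]
        have h2 : β ^ (2 * q - 2) * β ^ 2 = 1 * β ^ 2 := by
          rw [one_mul, ← pow_add]
          have hx : 2 * q - 2 + 2 = 2 * q := by omega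
          rw [hx, h1]
        exact mul_right_cancel₀ (pow_ne_zero 2 hβ0) h2
      have hdvd : q ^ 2 - 1 ∣ 2 * q - 2 := horder ▸ orderOf_dvd_of_pow_eq_one hpow
      have hle : q ^ 2 - 1 ≤ 2 * q - 2 := Nat.le_of_dvd (by omega) hdvd
      have h2q : 2 * q ≤ q * q := Nat.mul_le_mul_right q hq2
      rw [pow_two] at hle
      omega
  -- the additive map G
  obtain ⟨G, hGapp⟩ : ∃ G : F × F →+ E,
      ∀ x : F × F, G x = (ψ.symm x.1 : E) * β + (ψ.symm x.2 : E) * σ β := by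
    refine ⟨AddMonoidHom.mk' (fun x => (ψ.symm x.1 : E) * β + (ψ.symm x.2 : E) * σ β) ?_,
      fun _ => rfl⟩
    intro x y
    simp only [Prod.fst_add, Prod.snd_add, map_add, Subfield.coe_add]
    ring
  have hGinj : Function.Injective G := by
    rw [injective_iff_map_eq_zero]
    intro x hx
    rw [hGapp] at hx
    obtain ⟨h1, h2⟩ := indep _ _ (hfix _) (hfix _) hx
    have e1 : ψ.symm x.1 = 0 := by exact_mod_cast h1
    have e2 : ψ.symm x.2 = 0 := by exact_mod_cast h2
    have f1 : x.1 = 0 := by have := congrArg ψ e1; simpa using this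
    have f2 : x.2 = 0 := by have := congrArg ψ e2; simpa using this
    exact Prod.ext f1 f2
  have hGbij : Function.Bijective G := by
    rw [Fintype.bijective_iff_injective_and_card]
    exact ⟨hGinj, by rw [Fintype.card_prod, hE]; ring⟩
  obtain ⟨e, hKe, heK⟩ : ∃ e : E ≃+ F × F,
      (∀ u : E, G (e u) = u) ∧ (∀ x : F × F, e (G x) = x) := by
    refine ⟨(AddEquiv.ofBijective G hGbij).symm, ?_, ?_⟩
    · intro u; exact (AddEquiv.ofBijective G hGbij).apply_symm_apply u
    · intro x; exact (AddEquiv.ofBijective G hGbij).symm_apply_apply x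
  -- δ
  obtain ⟨δ, hδdef⟩ : ∃ δ : E, δ = σ β * σ β - β * β := ⟨_, rfl⟩
  have hσδ : σ δ = -δ := by
    rw [hδdef, map_sub, map_mul, map_mul, hσσ]
    ring
  have hδ0 : δ ≠ 0 := by
    have hfac : δ = (σ β - β) * (σ β + β) := by rw [hδdef]; ring
    rw [hfac]
    apply mul_ne_zero
    · intro h
      rw [sub_eq_zero] at h
      have h0 : (1 : E) * β + (-1 : E) * σ β = 0 := by rw [h]; ring
      exact one_ne_zero (indep 1 (-1) (map_one σ) (by rw [map_neg, map_one]) h0).1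
    · intro h
      have h0 : (1 : E) * β + (1 : E) * σ β = 0 := by rw [one_mul, one_mul, add_comm]; exact h
      exact one_ne_zero (indep 1 1 (map_one σ) (map_one σ) h0).1
  -- θ
  have hmem : ∀ w : E, (w - σ w) * δ⁻¹ ∈ F' := by
    intro w
    rw [hmemF']
    rw [map_mul, map_sub, map_inv₀, hσσ, hσδ, inv_neg]
    ring
  obtain ⟨θ, hθapp⟩ : ∃ θ : E →+ F, ∀ w : E, θ w = ψ ⟨(w - σ w) * δ⁻¹, hmem w⟩ := by
    refine ⟨AddMonoidHom.mk' (fun w => ψ ⟨(w - σ w) * δ⁻¹, hmem w⟩) ?_, fun _ => rfl⟩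
    intro x y
    have hx : (⟨(x + y - σ (x + y)) * δ⁻¹, hmem _⟩ : F')
        = ⟨(x - σ x) * δ⁻¹, hmem x⟩ + ⟨(y - σ y) * δ⁻¹, hmem y⟩ := by
      apply Subtype.ext
      push_cast
      rw [map_add]
      ring
    show ψ ⟨(x + y - σ (x + y)) * δ⁻¹, hmem _⟩
        = ψ ⟨(x - σ x) * δ⁻¹, hmem x⟩ + ψ ⟨(y - σ y) * δ⁻¹, hmem y⟩
    rw [hx, map_add]
  refine ⟨σ, e, θ, hσ, ?_, ?_, ?_⟩
  · -- [I1]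
    intro u v
    have hu : u = (ψ.symm (e u).1 : E) * β + (ψ.symm (e u).2 : E) * σ β := by
      conv_lhs => rw [← hKe u, hGapp]
    have hv : v = (ψ.symm (e v).1 : E) * β + (ψ.symm (e v).2 : E) * σ β := by
      conv_lhs => rw [← hKe v, hGapp]
    set A : E := (ψ.symm (e u).1 : E) with hA
    set B : E := (ψ.symm (e u).2 : E) with hB
    set A' : E := (ψ.symm (e v).1 : E) with hA'
    set B' : E := (ψ.symm (e v).2 : E) with hB'
    have hσu : σ u = A * σ β + B * β := by
      rw [hu, map_add, map_mul, map_mul, hA, hB, hfix, hfix, hσσ]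
    have hσv : σ v = A' * σ β + B' * β := by
      rw [hv, map_add, map_mul, map_mul, hA', hB', hfix, hfix, hσσ]
    have hw : u * σ v - σ (u * σ v) = (A' * B - A * B') * δ := by
      rw [map_mul, hσσ]
      calc u * σ v - σ u * v = (A * β + B * σ β) * (A' * σ β + B' * β)
            - (A * σ β + B * β) * (A' * β + B' * σ β) := by rw [← hu, ← hv, ← hσu, ← hσv]
        _ = (A' * B - A * B') * δ := by rw [hδdef]; ring
    have hvq : v ^ q = σ v := (hσ v).symm
    rw [hvq, hθapp]
    have hsub : (⟨(u * σ v - σ (u * σ v)) * δ⁻¹, hmem _⟩ : F')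
        = ψ.symm (e v).1 * ψ.symm (e u).2 - ψ.symm (e u).1 * ψ.symm (e v).2 := by
      apply Subtype.ext
      push_cast
      rw [hw, ← hA, ← hB, ← hA', ← hB']
      field_simp
    rw [hsub, map_sub, map_mul, map_mul, RingEquiv.apply_symm_apply,
      RingEquiv.apply_symm_apply, RingEquiv.apply_symm_apply, RingEquiv.apply_symm_apply]
  · -- [I2]
    intro s hs
    by_contra hs0
    obtain ⟨a, ha⟩ := Algebra.trace_surjective (ZMod p) F 1
    have haz : Algebra.trace (ZMod p) F a ≠ 0 := by rw [ha]; exact one_ne_zero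
    have hz : ((ψ.symm a : E) * δ) ^ q = -((ψ.symm a : E) * δ) := by
      rw [← hσ, map_mul, hfix, hσδ]
      ring
    obtain ⟨w, hw⟩ := hsurj _ hz
    have key : θ (w * s⁻¹ * s) = a := by
      have hws : w * s⁻¹ * s = w := by field_simp
      rw [hws, hθapp]
      have hx : (⟨(w - σ w) * δ⁻¹, hmem w⟩ : F') = ψ.symm a := by
        apply Subtype.ext
        show (w - σ w) * δ⁻¹ = ((ψ.symm a : F') : E)
        rw [hw]
        field_simp
      rw [hx, RingEquiv.apply_symm_apply]
    have hcontra := hs (w * s⁻¹)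
    rw [key] at hcontra
    exact haz hcontra
  · -- [I3]
    intro a
    refine ⟨(ψ.symm a : E), fun u => ?_⟩
    have hx : (ψ.symm a : E) * u = G (a • e u) := by
      conv_lhs => rw [← hKe u, hGapp]
      rw [hGapp]
      have h1 : (a • e u).1 = a * (e u).1 := rfl
      have h2 : (a • e u).2 = a * (e u).2 := rfl
      rw [h1, h2, map_mul, map_mul]
      push_cast
      ring
    rw [hx, heK]

lemma minSwt_image {F E : Type} [Field F] [Field E] {n : ℕ}
    (Φ : (Fin n → E) ≃+ ((Fin n → F) × (Fin n → F)))
    (hswt : ∀ x, swt (Φ x) = hwt x) (A B : Set (Fin n → E)) :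
    minSwt ((Φ '' A) \ (Φ '' B)) = minHwt (A \ B) := by
  unfold minSwt minHwt
  congr 1
  rw [← Set.image_diff Φ.injective]
  have h0 : ({0} : Set ((Fin n → F) × (Fin n → F))) = Φ '' {0} := by
    rw [Set.image_singleton, map_zero]
  rw [h0, ← Set.image_diff Φ.injective, Set.image_image]
  exact Set.image_congr fun a _ => hswt a

lemma herm_dual_card_lb {E : Type} [Field E] [Fintype E] {n : ℕ} (q : ℕ)
    (hq : ∀ x : E, (x ^ q) ^ q = x) (S : Submodule E (Fin n → E)) :
    Nat.card E ^ (n - Module.finrank E S) ≤ Nat.card (hermDual q (S : Set (Fin n → E))) := by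
  classical
  set k := Module.finrank E S with hk
  set f : (Fin n → E) →+ Module.Dual E S := AddMonoidHom.mk'
    (fun x =>
      { toFun := fun y => ∑ i, x i * (y : Fin n → E) i
        map_add' := by
          intro y z
          simp only [Submodule.coe_add, Pi.add_apply, mul_add, Finset.sum_add_distrib]
        map_smul' := by
          intro c y
          simp only [SetLike.val_smul, Pi.smul_apply, smul_eq_mul, RingHom.id_apply,
            Finset.mul_sum]
          exact Finset.sum_congr rfl fun i _ => by ring })
    (by
      intro x z
      apply LinearMap.ext
      intro y
      simp only [Pi.add_apply, add_mul, Finset.sum_add_distrib, LinearMap.coe_mk,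
        AddHom.coe_mk, LinearMap.add_apply]) with hf
  have hfapp : ∀ x (y : S), f x y = ∑ i, x i * (y : Fin n → E) i := fun _ _ => rfl
  have hker : ((f.ker : AddSubgroup (Fin n → E)) : Set (Fin n → E))
      = {x | ∀ y ∈ S, ∑ i, x i * y i = 0} := by
    ext x
    simp only [SetLike.mem_coe, AddMonoidHom.mem_ker, Set.mem_setOf_eq]
    constructor
    · intro h y hy
      have h2 := congrArg (fun g => g ⟨y, hy⟩) h
      simpa [hfapp] using h2
    · intro h
      apply LinearMap.ext
      intro y
      rw [hfapp]
      simpa using h y y.2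
  have hcard1 : Nat.card (Fin n → E) = Nat.card f.range * Nat.card f.ker := by
    rw [AddSubgroup.card_eq_card_quotient_mul_card_addSubgroup f.ker]
    congr 1
    exact Nat.card_congr (QuotientAddGroup.quotientKerEquivRange f).toEquiv
  letI : Finite (Module.Dual E S) :=
    Finite.of_injective (fun g : Module.Dual E S => (g : S → E)) DFunLike.coe_injective
  letI : Fintype (Module.Dual E S) := Fintype.ofFinite _
  letI : Fintype S := Fintype.ofFinite _
  have hdualcard : Nat.card (Module.Dual E S) = Nat.card E ^ k := by
    rw [Nat.card_eq_fintype_card, Nat.card_eq_fintype_card,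
      Module.card_eq_pow_finrank (K := E) (V := Module.Dual E S), Subspace.dual_finrank_eq]
  have hrange_le : Nat.card f.range ≤ Nat.card E ^ k := by
    rw [← hdualcard]
    exact Nat.card_le_card_of_injective _ Subtype.val_injective
  have hpin : Nat.card (Fin n → E) = Nat.card E ^ n := by
    rw [Nat.card_pi, Finset.prod_const, Finset.card_univ, Fintype.card_fin]
  have hkn : k ≤ n := by
    have h1 := Submodule.finrank_le S
    rwa [Module.finrank_pi E, Fintype.card_fin] at h1
  have hq0 : 0 < Nat.card E := Nat.card_pos
  have hkerlb : Nat.card E ^ (n - k) ≤ Nat.card f.ker := by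
    have h1 : Nat.card E ^ (n - k) * Nat.card E ^ k ≤ Nat.card f.ker * Nat.card E ^ k := by
      rw [← pow_add]
      have h2 : n - k + k = n := by omega
      rw [h2, ← hpin, hcard1]
      calc Nat.card f.range * Nat.card f.ker
          ≤ Nat.card E ^ k * Nat.card f.ker := Nat.mul_le_mul_right _ hrange_le
        _ = Nat.card f.ker * Nat.card E ^ k := by ring
    exact Nat.le_of_mul_le_mul_right h1 (pow_pos hq0 k)
  refine le_trans hkerlb ?_
  have hkc : Nat.card f.ker = ((f.ker : AddSubgroup (Fin n → E)) : Set (Fin n → E)).ncard :=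
    Nat.card_coe_set_eq _
  have hhc : Nat.card (hermDual q (S : Set (Fin n → E)))
      = (hermDual q (S : Set (Fin n → E))).ncard := Nat.card_coe_set_eq _
  rw [hkc, hhc]
  have hinj : Function.Injective (fun z : Fin n → E => fun i => z i ^ q) := by
    intro z z' h
    funext i
    have := congrArg (fun w => (w i) ^ q) h
    simpa [hq] using this
  have himg : (fun z : Fin n → E => fun i => z i ^ q) ''
      ((f.ker : AddSubgroup (Fin n → E)) : Set (Fin n → E))
      ⊆ hermDual q (S : Set (Fin n → E)) := by
    rintro w ⟨z, hz, rfl⟩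
    rw [hker] at hz
    intro y hy
    have h3 : ∀ i, (z i ^ q) ^ q * y i = z i * y i := fun i => by rw [hq]
    rw [Finset.sum_congr rfl fun i _ => h3 i]
    exact hz y hy
  calc ((f.ker : AddSubgroup (Fin n → E)) : Set (Fin n → E)).ncard
      = ((fun z : Fin n → E => fun i => z i ^ q) ''
          ((f.ker : AddSubgroup (Fin n → E)) : Set (Fin n → E))).ncard :=
        (Set.ncard_image_of_injective _ hinj).symm
    _ ≤ (hermDual q (S : Set (Fin n → E))).ncard :=
        Set.ncard_le_ncard himg (Set.toFinite _)

lemma isSubsysCode_iff (p : ℕ) {F : Type} [Field F] [Fintype F] [CharP F p] {n : ℕ}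
    (C : AddSubgroup ((Fin n → F) × (Fin n → F))) (K R d : ℕ) :
    IsSubsysCode p C K R d ↔
      (Nat.card ((C : Set ((Fin n → F) × (Fin n → F))) ∩ sympDual p ↑C : Set _) * (K * R)
          = Fintype.card F ^ n ∧
        Nat.card C * K = Fintype.card F ^ n * R ∧
        (sympDual p ((C : Set ((Fin n → F) × (Fin n → F))) ∩ sympDual p ↑C) = ↑C →
          d = minSwt (sympDual p ((C : Set ((Fin n → F) × (Fin n → F))) ∩ sympDual p ↑C))) ∧
        (sympDual p ((C : Set ((Fin n → F) × (Fin n → F))) ∩ sympDual p ↑C) ≠ ↑C →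
          d = minSwt (sympDual p ((C : Set ((Fin n → F) × (Fin n → F))) ∩ sympDual p ↑C) \ ↑C))) :=
  Iff.rfl

end AuxiliaryLemmas

/-- Hermitian construction of subsystem codes.
If `C` is a `k'`-dimensional `F_{q^2}`-linear code of length `n` whose subcode
`D = C ∩ C^⊥h` has dimension `k''`, where `k' + k'' < n`, then there exists an
`F_q`-linear `[[n, n−(k'+k''), k'−k'', d]]_q` Clifford subsystem code, where
`d = wt(D^⊥h \ C)`. -/
theorem hermitian_construction_of_subsystem_codes
    (p : ℕ) (hp : p.Prime) (F : Type) [Field F] [Fintype F] [CharP F p]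
    (E : Type) [Field E] [Fintype E] [CharP E p]
    (hE : Fintype.card E = Fintype.card F ^ 2)
    (n k' k'' : ℕ) (C D : Submodule E (Fin n → E))
    (hD : (D : Set (Fin n → E)) = ↑C ∩ hermDual (Fintype.card F) ↑C)
    (hk' : Module.finrank E C = k') (hk'' : Module.finrank E D = k'')
    (hlt : k' + k'' < n) :
    ∃ Q : AddSubgroup ((Fin n → F) × (Fin n → F)),
      IsSubsysCode p Q (Fintype.card F ^ (n - (k' + k'')))
        (Fintype.card F ^ (k' - k''))
        (minHwt (hermDual (Fintype.card F) (↑D : Set (Fin n → E)) \ ↑C)) ∧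
      FqLinear Q := by
  classical
  haveI : Fact p.Prime := ⟨hp⟩
  letI := ZMod.algebra F p
  set q := Fintype.card F with hqdef
  have hq2 : 2 ≤ q := Fintype.one_lt_card
  obtain ⟨σ, e, θ, hσ, hI1, hI2, hI3⟩ := exists_good_pair p F E hE
  have hσσ : ∀ x : E, σ (σ x) = x := by
    intro x; rw [hσ, hσ, ← pow_mul, ← sq, ← hE, FiniteField.pow_card]
  have hqq : ∀ x : E, (x ^ q) ^ q = x := by
    intro x; rw [← hσ, ← hσ, hσσ]
  -- the coordinate map
  obtain ⟨Φ, hΦ1, hΦ2⟩ : ∃ Φ : (Fin n → E) ≃+ ((Fin n → F) × (Fin n → F)),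
      (∀ x i, (Φ x).1 i = (e (x i)).1) ∧ (∀ x i, (Φ x).2 i = (e (x i)).2) := by
    refine ⟨{ toFun := fun x => (fun i => (e (x i)).1, fun i => (e (x i)).2)
              invFun := fun v => fun i => e.symm (v.1 i, v.2 i)
              left_inv := by intro x; funext i; simp
              right_inv := by
                intro v
                refine Prod.ext ?_ ?_ <;> funext i <;> simp
              map_add' := by
                intro x y
                refine Prod.ext ?_ ?_ <;> funext i <;> simp }, fun _ _ => rfl, fun _ _ => rfl⟩
  have hswt : ∀ x, swt (Φ x) = hwt x := by
    intro x
    unfold swt hwt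
    congr 1
    ext i
    simp only [Set.mem_setOf_eq, ne_eq, hΦ1, hΦ2]
    have hz : e (x i) = 0 ↔ x i = 0 := EmbeddingLike.map_eq_zero_iff
    rw [← hz, Prod.ext_iff]
    simp
  have htr : ∀ u v : (Fin n → F) × (Fin n → F), trSympForm p u v
      = Algebra.trace (ZMod p) F (∑ i, (v.1 i * u.2 i - u.1 i * v.2 i)) := fun _ _ => rfl
  have hform : ∀ x z : Fin n → E, trSympForm p (Φ x) (Φ z)
      = Algebra.trace (ZMod p) F (θ (∑ i, x i * z i ^ q)) := by
    intro x z
    rw [htr]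
    congr 1
    calc ∑ i, ((Φ z).1 i * (Φ x).2 i - (Φ x).1 i * (Φ z).2 i)
        = ∑ i, θ (x i * z i ^ q) := Finset.sum_congr rfl fun i _ => by
          rw [hΦ1, hΦ2, hΦ1, hΦ2]; exact hI1 _ _
      _ = θ (∑ i, x i * z i ^ q) := (map_sum θ _ _).symm
  have hflip : ∀ (x y : Fin n → E), σ (∑ i, x i ^ q * y i) = ∑ i, x i * y i ^ q := by
    intro x y
    rw [map_sum]
    exact Finset.sum_congr rfl fun i _ => by rw [map_mul, hσ, hσ, hqq]
  -- the duality translation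
  have hdual : ∀ S : Submodule E (Fin n → E),
      sympDual p (Φ '' (S : Set (Fin n → E))) = Φ '' (hermDual q (S : Set (Fin n → E))) := by
    intro S
    ext v
    obtain ⟨x, rfl⟩ := Φ.surjective v
    constructor
    · intro hv
      refine Set.mem_image_of_mem _ ?_
      intro y hy
      have hs : ∀ γ : E, Algebra.trace (ZMod p) F (θ (γ * σ (∑ i, x i ^ q * y i))) = 0 := by
        intro γ
        obtain ⟨c, hc⟩ : ∃ c : E, σ c = γ :=
          (Finite.injective_iff_bijective.mp σ.injective).2 γ
        have hz : Φ (c • y) ∈ Φ '' (S : Set (Fin n → E)) :=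
          Set.mem_image_of_mem _ (S.smul_mem c hy)
        have h0 := hv _ hz
        rw [hform] at h0
        have harg : (∑ i, x i * ((c • y) i) ^ q) = γ * σ (∑ i, x i ^ q * y i) := by
          rw [hflip, ← hc, Finset.mul_sum]
          refine Finset.sum_congr rfl fun i _ => ?_
          rw [Pi.smul_apply, smul_eq_mul, mul_pow, hσ c]
          ring
        rwa [harg] at h0
      have h1 := hI2 _ hs
      exact σ.injective (by rw [h1, map_zero])
    · rintro ⟨x', hx', hxx⟩
      have hx : x ∈ hermDual q (S : Set (Fin n → E)) := by rwa [Φ.injective hxx] at hx'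
      rintro w ⟨z, hz, rfl⟩
      rw [hform]
      have h2 : (∑ i, x i * z i ^ q) = σ (∑ i, x i ^ q * z i) := (hflip x z).symm
      rw [h2, hx z hz, map_zero, map_zero, map_zero]
  -- the subsystem code
  set Q : AddSubgroup ((Fin n → F) × (Fin n → F)) :=
    (Submodule.toAddSubgroup C).map Φ.toAddMonoidHom with hQ
  have hQset : (Q : Set ((Fin n → F) × (Fin n → F))) = Φ '' (C : Set (Fin n → E)) := by
    rw [hQ, AddSubgroup.coe_map]
    rfl
  -- cardinalities
  letI : Fintype C := Fintype.ofFinite _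
  letI : Fintype D := Fintype.ofFinite _
  have hC2 : Nat.card (C : Set (Fin n → E)) = q ^ (2 * k') := by
    have h1 : Nat.card (C : Set (Fin n → E)) = Nat.card C := rfl
    rw [h1, Nat.card_eq_fintype_card, Module.card_eq_pow_finrank (K := E) (V := C), hE, hk',
      ← pow_mul]
  have hD2 : Nat.card (D : Set (Fin n → E)) = q ^ (2 * k'') := by
    have h1 : Nat.card (D : Set (Fin n → E)) = Nat.card D := rfl
    rw [h1, Nat.card_eq_fintype_card, Module.card_eq_pow_finrank (K := E) (V := D), hE, hk'',
      ← pow_mul]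
  have himgcard : ∀ A : Set (Fin n → E), Nat.card (Φ '' A : Set _) = Nat.card A := by
    intro A
    rw [Nat.card_coe_set_eq, Nat.card_coe_set_eq, Set.ncard_image_of_injective _ Φ.injective]
  have hDleC : D ≤ C := by
    intro x hx
    have hx' : x ∈ (D : Set (Fin n → E)) := hx
    rw [hD] at hx'
    exact hx'.1
  have hkk : k'' ≤ k' := by
    rw [← hk', ← hk'']
    exact Submodule.finrank_mono hDleC
  have hkn : k' + k'' ≤ n := le_of_lt hlt
  -- the key set identities
  have hDs : ((Q : Set ((Fin n → F) × (Fin n → F))) ∩ sympDual p ↑Q) = Φ '' (D : Set (Fin n → E)) := by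
    rw [hQset, hdual C, ← Set.image_inter Φ.injective, ← hD]
  have hQcard : Nat.card Q = q ^ (2 * k') := by
    have h1 : Nat.card Q = Nat.card ((Q : Set ((Fin n → F) × (Fin n → F))) : Set _) := rfl
    rw [h1, hQset, himgcard, hC2]
  -- the inequality for condition 3
  have hne : sympDual p ((Q : Set ((Fin n → F) × (Fin n → F))) ∩ sympDual p ↑Q) ≠ ↑Q := by
    rw [hDs, hdual D, hQset]
    intro h
    have h2 : hermDual q (D : Set (Fin n → E)) = (C : Set (Fin n → E)) :=
      (Set.image_injective.mpr Φ.injective) h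
    have h3 := herm_dual_card_lb q hqq D
    rw [hk''] at h3
    have h4 : Nat.card E = q ^ 2 := by rw [Nat.card_eq_fintype_card, hE]
    rw [h4, h2, hC2, ← pow_mul] at h3
    have h5 : 2 * (n - k'') ≤ 2 * k' := (Nat.pow_le_pow_iff_right hq2).mp h3
    omega
  refine ⟨Q, ?_, ?_⟩
  · rw [isSubsysCode_iff]
    refine ⟨?_, ?_, ?_, ?_⟩
    · rw [hDs, himgcard, hD2, ← pow_add, ← pow_add]
      congr 1
      omega
    · rw [hQcard, ← pow_add, ← pow_add]
      congr 1
      omega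
    · intro h
      exact absurd h hne
    · intro _
      rw [hDs, hdual D, hQset, minSwt_image Φ hswt]
  · -- FqLinear
    intro a v hv
    rw [hQ] at hv ⊢
    obtain ⟨x, hxC, rfl⟩ := AddSubgroup.mem_map.mp hv
    obtain ⟨c, hc⟩ := hI3 a
    have key : a • (Φ.toAddMonoidHom x) = Φ.toAddMonoidHom (c • x) := by
      refine Prod.ext (funext fun i => ?_) (funext fun i => ?_)
      · show a * (Φ x).1 i = (Φ (c • x)).1 i
        rw [hΦ1, hΦ1]
        have h1 : (c • x) i = c * x i := rfl
        rw [h1, hc]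
        rfl
      · show a * (Φ x).2 i = (Φ (c • x)).2 i
        rw [hΦ2, hΦ2]
        have h1 : (c • x) i = c * x i := rfl
        rw [h1, hc]
        rfl
    rw [key]
    exact AddSubgroup.mem_map.mpr ⟨c • x, C.smul_mem c hxC, rfl⟩
end

section
/- Cyclic subsystem codes, Euclidean case: Let D be a k-dimensional self-orthogonal (D ⊆ D^⊥) cyclic code of length n over F_q with gcd(n,q) = 1, and let T_D and T_{D^⊥} be the defining sets of D and D^⊥. Let T be a subset of T_D \ T_{D^⊥} that is a union of cyclotomic cosets, and let C be the cyclic code of length n over F_q with defining set T_C = T_D \ (T ∪ T^{−1}). If r = |T ∪ T^{−1}| satisfies 0 ≤ r < n − 2k, then C ∩ C^⊥ = D, dim_{F_q} C = k + r, and there exists an [[n, n−2k−r, r, d]]_q Clifford subsystem code with d = wt(D^⊥ \ C), the minimum Hamming weight of a vector in D^⊥ not in C. -/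
open Finset

set_option linter.unusedSectionVars false
namespace CycAux
open Polynomial
variable {F : Type} [Field F] [Fintype F]
variable {n : ℕ} [NeZero n]
variable {E : Type} [Field E] [Algebra F E] {α : E}

lemma pow_mod (hα : IsPrimitiveRoot α n) (a : ℕ) : α ^ a = α ^ (a % n) := by
  conv_lhs => rw [← Nat.div_add_mod a n]
  rw [pow_add, pow_mul, hα.pow_eq_one, one_pow, one_mul]

lemma pow_modeq (hα : IsPrimitiveRoot α n) {a b : ℕ} (h : a ≡ b [MOD n]) :
    α ^ a = α ^ b := by
  rw [pow_mod hα a, pow_mod hα b, h]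

lemma pow_val_mul (hα : IsPrimitiveRoot α n) (t s : ZMod n) :
    α ^ (t * s).val = α ^ (t.val * s.val) := by
  rw [pow_mod hα (t.val * s.val), ZMod.val_mul]

lemma pow_val_add (hα : IsPrimitiveRoot α n) (t s : ZMod n) :
    α ^ (t + s).val = α ^ t.val * α ^ s.val := by
  rw [← pow_add, pow_mod hα (t.val + s.val), ZMod.val_add]

lemma pow_val_injective (hα : IsPrimitiveRoot α n) :
    Function.Injective (fun t : ZMod n => α ^ t.val) := by
  intro s t h
  have := hα.pow_inj (ZMod.val_lt s) (ZMod.val_lt t) h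
  exact ZMod.val_injective n this

lemma sum_pow_val (hα : IsPrimitiveRoot α n) (u : ZMod n) :
    ∑ t : ZMod n, α ^ (t * u).val = if u = 0 then (n : E) else 0 := by
  rcases eq_or_ne u 0 with rfl | hu
  · simp only [mul_zero, ZMod.val_zero, pow_zero, if_true, sum_const, card_univ, ZMod.card,
      nsmul_eq_mul, mul_one]
  · rw [if_neg hu]
    have hval : ∀ t : ZMod n, α ^ (t * u).val = (α ^ u.val) ^ t.val := by
      intro t
      rw [pow_val_mul hα, mul_comm t.val, pow_mul]
    simp_rw [hval]
    have hβ : (α ^ u.val) ≠ 1 := by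
      have h1 : 0 < u.val := by
        exact ZMod.val_pos.mpr hu
      exact hα.pow_ne_one_of_pos_of_lt h1.ne' (ZMod.val_lt u)
    have hre : ∑ t : ZMod n, (α ^ u.val) ^ t.val = ∑ j ∈ range n, (α ^ u.val) ^ j := by
      refine Finset.sum_bij' (fun t _ => t.val) (fun j _ => (j : ZMod n)) ?_ ?_ ?_ ?_ ?_
      · intro t _; exact mem_range.mpr (ZMod.val_lt t)
      · intro j _; exact mem_univ _
      · intro t _; exact ZMod.natCast_rightInverse t
      · intro j hj; exact ZMod.val_cast_of_lt (mem_range.mp hj)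
      · intro t _; rfl
    rw [hre, geom_sum_eq hβ]
    have : (α ^ u.val) ^ n = 1 := by
      rw [← pow_mul, mul_comm, pow_mul, hα.pow_eq_one, one_pow]
    rw [this, sub_self, zero_div]

noncomputable def evalSum (α : E) (c : Fin n → F) (t : ZMod n) : E :=
  ∑ i : Fin n, algebraMap F E (c i) * α ^ (t * ((i : ℕ) : ZMod n)).val

lemma evalSum_add (α : E) (c c' : Fin n → F) (t : ZMod n) :
    evalSum α (c + c') t = evalSum α c t + evalSum α c' t := by
  simp [evalSum, add_mul, Finset.sum_add_distrib]

lemma evalSum_smul (α : E) (a : F) (c : Fin n → F) (t : ZMod n) :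
    evalSum α (a • c) t = algebraMap F E a * evalSum α c t := by
  simp [evalSum, Finset.mul_sum, mul_assoc]

/-- The cyclic code over `F` with defining set `S`. -/
noncomputable def BS (α : E) (S : Finset (ZMod n)) : Submodule F (Fin n → F) where
  carrier := {c | ∀ t ∈ S, evalSum α c t = 0}
  add_mem' := by
    intro c c' hc hc' t ht
    rw [evalSum_add, hc t ht, hc' t ht, add_zero]
  zero_mem' := by
    intro t _
    simp [evalSum]
  smul_mem' := by
    intro a c hc t ht
    rw [evalSum_smul, hc t ht, mul_zero]

lemma mem_BS_iff (α : E) (S : Finset (ZMod n)) (c : Fin n → F) :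
    c ∈ BS α S ↔ ∀ t ∈ S, evalSum α c t = 0 := Iff.rfl

lemma BS_anti {α : E} {S S' : Finset (ZMod n)} (h : S ⊆ S') : BS (F := F) α S' ≤ BS α S :=
  fun _ hc t ht => hc t (h ht)

/-- Fourier inversion / Plancherel-type identity. -/
lemma key_identity (hα : IsPrimitiveRoot α n) (x y : Fin n → F) :
    (n : E) * algebraMap F E (∑ i, x i * y i) =
      ∑ t : ZMod n, evalSum α x (-t) * evalSum α y t := by
  have hterm : ∀ t : ZMod n, evalSum α x (-t) * evalSum α y t =
      ∑ i : Fin n, ∑ j : Fin n, (algebraMap F E (x i) * algebraMap F E (y j)) *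
        α ^ ((t * (((j : ℕ) : ZMod n) - ((i : ℕ) : ZMod n))).val) := by
    intro t
    rw [evalSum, evalSum, Finset.sum_mul_sum]
    refine Finset.sum_congr rfl fun i _ => Finset.sum_congr rfl fun j _ => ?_
    have : α ^ ((-t) * ((i : ℕ) : ZMod n)).val * α ^ ((t * ((j : ℕ) : ZMod n)).val) =
        α ^ ((t * (((j : ℕ) : ZMod n) - ((i : ℕ) : ZMod n))).val) := by
      rw [← pow_val_add hα]
      congr 1
      ring_nf
    rw [← this]; ring
  have hinner : ∀ i : Fin n, ∑ j : Fin n, ∑ t : ZMod n,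
      (algebraMap F E (x i) * algebraMap F E (y j)) *
        α ^ ((t * (((j : ℕ) : ZMod n) - ((i : ℕ) : ZMod n))).val) =
      (n : E) * (algebraMap F E (x i) * algebraMap F E (y i)) := by
    intro i
    have h1 : ∀ j : Fin n, ∑ t : ZMod n,
        (algebraMap F E (x i) * algebraMap F E (y j)) *
          α ^ ((t * (((j : ℕ) : ZMod n) - ((i : ℕ) : ZMod n))).val) =
        if j = i then (n : E) * (algebraMap F E (x i) * algebraMap F E (y j)) else 0 := by
      intro j
      rw [← Finset.mul_sum, sum_pow_val hα]
      have hiff : (((j : ℕ) : ZMod n) - ((i : ℕ) : ZMod n) = 0) ↔ j = i := by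
        constructor
        · intro h
          have h2 : ((j : ℕ) : ZMod n) = ((i : ℕ) : ZMod n) := by
            rwa [sub_eq_zero] at h
          have := congrArg ZMod.val h2
          rw [ZMod.val_natCast, ZMod.val_natCast, Nat.mod_eq_of_lt j.isLt,
            Nat.mod_eq_of_lt i.isLt] at this
          exact Fin.ext this
        · rintro rfl; rw [sub_self]
      by_cases h : j = i
      · rw [if_pos (hiff.mpr h), if_pos h, mul_comm]
      · rw [if_neg (fun hh => h (hiff.mp hh)), if_neg h, mul_zero]
    rw [Finset.sum_congr rfl (fun j _ => h1 j), Finset.sum_ite_eq' Finset.univ i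
      (fun j => (n : E) * (algebraMap F E (x i) * algebraMap F E (y j))), if_pos (mem_univ i)]
  calc (n : E) * algebraMap F E (∑ i, x i * y i)
      = ∑ i : Fin n, (n : E) * (algebraMap F E (x i) * algebraMap F E (y i)) := by
        rw [map_sum, Finset.mul_sum]
        exact Finset.sum_congr rfl fun i _ => by rw [map_mul]
    _ = ∑ i : Fin n, ∑ j : Fin n, ∑ t : ZMod n,
          (algebraMap F E (x i) * algebraMap F E (y j)) *
            α ^ ((t * (((j : ℕ) : ZMod n) - ((i : ℕ) : ZMod n))).val) :=
        Finset.sum_congr rfl fun i _ => (hinner i).symm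
    _ = ∑ i : Fin n, ∑ t : ZMod n, ∑ j : Fin n,
          (algebraMap F E (x i) * algebraMap F E (y j)) *
            α ^ ((t * (((j : ℕ) : ZMod n) - ((i : ℕ) : ZMod n))).val) :=
        Finset.sum_congr rfl fun i _ => Finset.sum_comm
    _ = ∑ t : ZMod n, ∑ i : Fin n, ∑ j : Fin n,
          (algebraMap F E (x i) * algebraMap F E (y j)) *
            α ^ ((t * (((j : ℕ) : ZMod n) - ((i : ℕ) : ZMod n))).val) :=
        Finset.sum_comm
    _ = ∑ t : ZMod n, evalSum α x (-t) * evalSum α y t :=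
        Finset.sum_congr rfl fun t _ => (hterm t).symm


/-- The polynomial with coefficient vector `c`. -/
noncomputable def Pc (c : Fin n → F) : F[X] := ((degreeLTEquiv F n).symm c : F[X])

lemma Pc_def (c : Fin n → F) : Pc c = ∑ i : Fin n, monomial (i : ℕ) (c i) := rfl

lemma Pc_mem (c : Fin n → F) : Pc c ∈ degreeLT F n := ((degreeLTEquiv F n).symm c).2

lemma Pc_coeff (c : Fin n → F) (i : Fin n) : (Pc c).coeff (i : ℕ) = c i :=
  congrFun ((degreeLTEquiv F n).apply_symm_apply c) i

lemma Pc_recover (Q : F[X]) (hQ : Q ∈ degreeLT F n) : Pc (fun i : Fin n => Q.coeff (i : ℕ)) = Q :=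
  congrArg Subtype.val ((degreeLTEquiv F n).symm_apply_apply ⟨Q, hQ⟩)

lemma eval_map_Pc (hα : IsPrimitiveRoot α n) (c : Fin n → F) (t : ZMod n) :
    ((Pc c).map (algebraMap F E)).eval (α ^ t.val) = evalSum α c t := by
  rw [Pc_def, Polynomial.map_sum, Polynomial.eval_finset_sum]
  refine Finset.sum_congr rfl fun i _ => ?_
  rw [Polynomial.map_monomial, Polynomial.eval_monomial]
  congr 1
  rw [← pow_mul, pow_mod hα (t.val * (i : ℕ)),
    ZMod.val_mul, ZMod.val_natCast, Nat.mod_eq_of_lt i.isLt]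

/-- The generator polynomial over the extension field. -/
noncomputable def gS (α : E) (S : Finset (ZMod n)) : E[X] := ∏ t ∈ S, (X - C (α ^ t.val))

lemma gS_monic (α : E) (S : Finset (ZMod n)) : (gS α S).Monic :=
  monic_prod_of_monic _ _ fun t _ => monic_X_sub_C _

lemma gS_natDegree (α : E) (S : Finset (ZMod n)) : (gS α S).natDegree = S.card := by
  rw [gS, natDegree_prod_of_monic _ _ (fun t _ => monic_X_sub_C _)]
  simp only [natDegree_X_sub_C, Finset.sum_const, smul_eq_mul, mul_one]

lemma gS_eval_mem (α : E) {S : Finset (ZMod n)} {t : ZMod n} (ht : t ∈ S) :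
    (gS α S).eval (α ^ t.val) = 0 := by
  rw [gS, Polynomial.eval_prod]
  exact Finset.prod_eq_zero ht (by simp)

lemma gS_eval_ne (hα : IsPrimitiveRoot α n) {S : Finset (ZMod n)} {t : ZMod n} (ht : t ∉ S) :
    (gS α S).eval (α ^ t.val) ≠ 0 := by
  rw [gS, Polynomial.eval_prod]
  rw [Finset.prod_ne_zero_iff]
  intro s hs
  simp only [eval_sub, eval_X, eval_C, sub_ne_zero]
  intro h
  exact ht (by rw [pow_val_injective hα h]; exact hs)

lemma mem_BS_iff_dvd (hα : IsPrimitiveRoot α n) (S : Finset (ZMod n)) (c : Fin n → F) :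
    c ∈ BS α S ↔ gS α S ∣ (Pc c).map (algebraMap F E) := by
  classical
  constructor
  · intro hc
    by_cases hP : (Pc c).map (algebraMap F E) = 0
    · rw [hP]; exact dvd_zero _
    · have himg : gS α S = ∏ x ∈ S.image (fun t => α ^ t.val), (X - C x) := by
        rw [Finset.prod_image (fun x _ y _ h => pow_val_injective hα h)]
        rfl
      have hsub : (S.image (fun t => α ^ t.val)).val ≤ ((Pc c).map (algebraMap F E)).roots := by
        rw [Multiset.le_iff_subset (S.image (fun t => α ^ t.val)).nodup]
        intro x hx
        obtain ⟨t, ht, rfl⟩ := Finset.mem_image.mp (Finset.mem_val.mp hx)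
        exact (Polynomial.mem_roots hP).mpr (by rw [Polynomial.IsRoot, eval_map_Pc hα]; exact hc t ht)
      calc gS α S = ((S.image (fun t => α ^ t.val)).val.map (fun x => X - C x)).prod := by
            rw [himg]; rfl
        _ ∣ (((Pc c).map (algebraMap F E)).roots.map (fun x => X - C x)).prod :=
            Multiset.prod_dvd_prod_of_le (Multiset.map_le_map hsub)
        _ ∣ (Pc c).map (algebraMap F E) := prod_multiset_X_sub_C_dvd _
  · rintro ⟨h, hh⟩ t ht
    rw [← eval_map_Pc hα, hh, Polynomial.eval_mul, gS_eval_mem α ht, zero_mul]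


/-- Closure of a defining set under the `q`-th power map. -/
def QClosed (q : ℕ) (S : Finset (ZMod n)) : Prop := ∀ t ∈ S, (q : ZMod n) * t ∈ S

lemma isUnit_q {q : ℕ} (hq : q.Coprime n) : IsUnit (q : ZMod n) :=
  ⟨ZMod.unitOfCoprime q hq, ZMod.coe_unitOfCoprime q hq⟩

lemma qclosed_back {q : ℕ} (hq : q.Coprime n) {S : Finset (ZMod n)} (hS : QClosed q S)
    {t : ZMod n} (ht : (q : ZMod n) * t ∈ S) : t ∈ S := by
  classical
  have hinj : Function.Injective (fun s : ZMod n => (q : ZMod n) * s) := by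
    intro a b h
    exact (isUnit_q hq).mul_left_cancel h
  have himg : S.image (fun s => (q : ZMod n) * s) = S := by
    apply Finset.eq_of_subset_of_card_le
    · intro x hx
      obtain ⟨s, hs, rfl⟩ := Finset.mem_image.mp hx
      exact hS s hs
    · rw [Finset.card_image_of_injective _ hinj]
  rw [← himg] at ht
  obtain ⟨s, hs, hqs⟩ := Finset.mem_image.mp ht
  rwa [← hinj hqs]

lemma QClosed.union {q : ℕ} {S S' : Finset (ZMod n)} (h : QClosed q S) (h' : QClosed q S') :
    QClosed q (S ∪ S') := by
  intro t ht
  rcases Finset.mem_union.mp ht with h1 | h1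
  · exact Finset.mem_union_left _ (h t h1)
  · exact Finset.mem_union_right _ (h' t h1)

lemma QClosed.negImage {q : ℕ} {S : Finset (ZMod n)} (h : QClosed q S) :
    QClosed q (S.image (fun s => -s)) := by
  classical
  intro t ht
  obtain ⟨s, hs, rfl⟩ := Finset.mem_image.mp ht
  exact Finset.mem_image.mpr ⟨(q : ZMod n) * s, h s hs, by ring⟩

lemma QClosed.sdiff {q : ℕ} (hq : q.Coprime n) {S S' : Finset (ZMod n)}
    (h : QClosed q S) (h' : QClosed q S') : QClosed q (S \ S') := by
  intro t ht
  rcases Finset.mem_sdiff.mp ht with ⟨h1, h2⟩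
  exact Finset.mem_sdiff.mpr ⟨h t h1, fun hc => h2 (qclosed_back hq h' hc)⟩

lemma QClosed.univ {q : ℕ} : QClosed (n := n) q Finset.univ := fun t _ => Finset.mem_univ _

/-- Fixed points of the `q`-power map on `E` lie in the image of `F`. -/
lemma fixed_mem_range {x : E} (hx : x ^ (Fintype.card F) = x) :
    x ∈ Set.range (algebraMap F E) := by
  classical
  set q := Fintype.card F with hqdef
  have hq2 : 2 ≤ q := Fintype.one_lt_card
  set h : E[X] := X ^ q - X with hh
  have hne : h ≠ 0 := by
    intro h0
    have : h.coeff q = 0 := by rw [h0]; simp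
    rw [hh, coeff_sub, coeff_X_pow, if_pos rfl, coeff_X, if_neg (by omega)] at this
    simp at this
  have hdeg : h.natDegree ≤ q := by
    refine le_trans (natDegree_sub_le _ _) ?_
    simp only [natDegree_X_pow, natDegree_X]
    omega
  by_contra hnot
  have hximg : x ∉ Finset.univ.image (algebraMap F E) := by
    intro hc
    obtain ⟨a, _, rfl⟩ := Finset.mem_image.mp hc
    exact hnot ⟨a, rfl⟩
  set s : Finset E := insert x (Finset.univ.image (algebraMap F E)) with hs
  have hroots : ∀ y ∈ s, y ∈ h.roots := by
    intro y hy
    refine (Polynomial.mem_roots hne).mpr ?_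
    rw [Polynomial.IsRoot, hh]
    simp only [eval_sub, eval_pow, eval_X, sub_eq_zero]
    rcases Finset.mem_insert.mp hy with rfl | h1
    · exact hx
    · obtain ⟨a, _, rfl⟩ := Finset.mem_image.mp h1
      rw [← map_pow, FiniteField.pow_card]
  have hcard : s.card ≤ q := by
    have hle : s.val ≤ h.roots := by
      rw [Multiset.le_iff_subset s.nodup]
      intro y hy
      exact hroots y (Finset.mem_val.mp hy)
    calc s.card = Multiset.card s.val := rfl
      _ ≤ Multiset.card h.roots := Multiset.card_le_card hle
      _ ≤ h.natDegree := Polynomial.card_roots' h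
      _ ≤ q := hdeg
  have : s.card = q + 1 := by
    rw [hs, Finset.card_insert_of_notMem hximg,
      Finset.card_image_of_injective _ (algebraMap F E).injective, Finset.card_univ]
  omega

lemma pow_q_val (hα : IsPrimitiveRoot α n) (q : ℕ) (t : ZMod n) :
    (α ^ t.val) ^ q = α ^ (((q : ZMod n) * t).val) := by
  rw [← pow_mul, pow_val_mul hα]
  apply pow_modeq hα
  calc t.val * q ≡ t.val * ((q : ZMod n)).val [MOD n] :=
        Nat.ModEq.mul_left t.val (by rw [ZMod.val_natCast]; exact (Nat.mod_modEq q n).symm)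
    _ = ((q : ZMod n)).val * t.val := Nat.mul_comm _ _

/-- The generator polynomial descends to `F` when the defining set is `q`-closed. -/
lemma exists_gF (p : ℕ) (hp : p.Prime) [CharP F p] (hα : IsPrimitiveRoot α n)
    (hqcop : (Fintype.card F).Coprime n) {S : Finset (ZMod n)}
    (hS : QClosed (Fintype.card F) S) :
    ∃ g' : F[X], g'.Monic ∧ g'.map (algebraMap F E) = gS α S ∧ g'.natDegree = S.card := by
  classical
  obtain ⟨m, _, hcard⟩ := FiniteField.card F p
  haveI : CharP E p := charP_of_injective_algebraMap (algebraMap F E).injective p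
  haveI : Fact p.Prime := ⟨hp⟩
  set q := Fintype.card F with hqdef
  set u : (ZMod n)ˣ := ZMod.unitOfCoprime q hqcop with hu
  have huq : (u : ZMod n) = (q : ZMod n) := ZMod.coe_unitOfCoprime q hqcop
  have hfrob : Polynomial.map (iterateFrobenius E p m) (gS α S) = gS α S := by
    rw [gS, Polynomial.map_prod]
    have hstep : ∀ t ∈ S, Polynomial.map (iterateFrobenius E p m) (X - C (α ^ t.val)) =
        X - C (α ^ (((q : ZMod n) * t).val)) := by
      intro t _
      rw [Polynomial.map_sub, Polynomial.map_X, Polynomial.map_C, iterateFrobenius_def,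
        ← hcard, pow_q_val hα]
    rw [Finset.prod_congr rfl hstep]
    refine Finset.prod_bij' (fun t _ => (q : ZMod n) * t)
      (fun t _ => ((u⁻¹ : (ZMod n)ˣ) : ZMod n) * t) ?_ ?_ ?_ ?_ ?_
    · intro t ht; exact hS t ht
    · intro t ht
      refine qclosed_back hqcop hS ?_
      have : (q : ZMod n) * (((u⁻¹ : (ZMod n)ˣ) : ZMod n) * t) = t := by
        rw [← huq, ← mul_assoc, Units.mul_inv, one_mul]
      rwa [this]
    · intro t _
      show ((u⁻¹ : (ZMod n)ˣ) : ZMod n) * ((q : ZMod n) * t) = t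
      rw [← huq, ← mul_assoc, Units.inv_mul, one_mul]
    · intro t _
      show (q : ZMod n) * (((u⁻¹ : (ZMod n)ˣ) : ZMod n) * t) = t
      rw [← huq, ← mul_assoc, Units.mul_inv, one_mul]
    · intro t _; rfl
  have hcoeff : ∀ i : ℕ, (gS α S).coeff i ∈ Set.range (algebraMap F E) := by
    intro i
    apply fixed_mem_range
    have := congrArg (fun P : E[X] => P.coeff i) hfrob
    simp only [Polynomial.coeff_map] at this
    rw [iterateFrobenius_def, ← hcard] at this
    exact this
  have hlift : gS α S ∈ Polynomial.lifts (algebraMap F E) :=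
    (Polynomial.lifts_iff_coeff_lifts _).mpr hcoeff
  obtain ⟨g', hmap, hdeg, hmon⟩ :=
    Polynomial.lifts_and_degree_eq_and_monic hlift (gS_monic α S)
  exact ⟨g', hmon, hmap, by
    rw [← gS_natDegree α S]
    exact natDegree_eq_of_degree_eq hdeg⟩

lemma finrank_BS (p : ℕ) (hp : p.Prime) [CharP F p] (hα : IsPrimitiveRoot α n)
    (hqcop : (Fintype.card F).Coprime n) {S : Finset (ZMod n)}
    (hS : QClosed (Fintype.card F) S) :
    Module.finrank F (BS (F := F) α S) = n - S.card := by
  classical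
  obtain ⟨g', hmon, hmap, hdeg⟩ := exists_gF p hp hα hqcop hS
  set d := S.card with hd
  have hdn : d ≤ n := by
    have := Finset.card_le_univ S
    rw [ZMod.card] at this
    omega
  have hg'ne : g' ≠ 0 := hmon.ne_zero
  have hprodmem : ∀ h : F[X], h ∈ degreeLT F (n - d) → g' * h ∈ degreeLT F n := by
    intro h hh
    rcases eq_or_ne h 0 with rfl | hne
    · rw [mul_zero]; exact Submodule.zero_mem _
    · rw [mem_degreeLT] at hh ⊢
      have h1 : h.natDegree < n - d := by
        rwa [Polynomial.natDegree_lt_iff_degree_lt hne]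
      have h2 : (g' * h).natDegree = d + h.natDegree := by
        rw [Polynomial.natDegree_mul hg'ne hne, hdeg]
      have h3 : (g' * h).natDegree < n := by omega
      rwa [← Polynomial.natDegree_lt_iff_degree_lt (mul_ne_zero hg'ne hne)]
  let μ : degreeLT F (n - d) →ₗ[F] (Fin n → F) :=
    { toFun := fun h => fun i : Fin n => ((g' : F[X]) * (h : F[X])).coeff (i : ℕ)
      map_add' := by
        intro a b; funext i
        simp [mul_add, Polynomial.coeff_add]
      map_smul' := by
        intro a b; funext i
        simp [mul_smul_comm, Polynomial.coeff_smul, smul_eq_mul] }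
  have hμmem : ∀ h : degreeLT F (n - d), μ h ∈ BS α S := by
    intro h
    have hrec : Pc (fun i : Fin n => ((g' : F[X]) * (h : F[X])).coeff (i : ℕ)) =
        g' * (h : F[X]) := Pc_recover _ (hprodmem _ h.2)
    rw [mem_BS_iff_dvd hα]
    show gS α S ∣ (Pc (fun i : Fin n => ((g' : F[X]) * (h : F[X])).coeff (i : ℕ))).map
      (algebraMap F E)
    rw [hrec, Polynomial.map_mul, hmap]
    exact dvd_mul_right _ _
  let ν : degreeLT F (n - d) →ₗ[F] BS (F := F) α S := μ.codRestrict (BS α S) hμmem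
  have hinj : Function.Injective ν := by
    intro a b hab
    have h0 : μ a = μ b := congrArg Subtype.val hab
    have h1 : Pc (μ a) = Pc (μ b) := congrArg Pc h0
    have h2 : (g' : F[X]) * (a : F[X]) = g' * (b : F[X]) := by
      have ha := Pc_recover ((g' : F[X]) * (a : F[X])) (hprodmem _ a.2)
      have hb := Pc_recover ((g' : F[X]) * (b : F[X])) (hprodmem _ b.2)
      rw [← ha, ← hb]
      exact h1
    have h3 : (a : F[X]) = (b : F[X]) := mul_left_cancel₀ hg'ne h2
    exact Subtype.ext h3
  have hsurj : Function.Surjective ν := by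
    rintro ⟨c, hc⟩
    have hdvd : g' ∣ Pc c := by
      refine (Polynomial.map_dvd_map (algebraMap F E) (algebraMap F E).injective hmon).mp ?_
      rw [hmap]
      exact (mem_BS_iff_dvd hα S c).mp hc
    obtain ⟨h, hh⟩ := hdvd
    have hhm : h ∈ degreeLT F (n - d) := by
      rcases eq_or_ne h 0 with rfl | hne
      · exact Submodule.zero_mem _
      · rw [mem_degreeLT, ← Polynomial.natDegree_lt_iff_degree_lt hne]
        have h1 : (Pc c).natDegree < n := by
          have := Pc_mem c
          rw [mem_degreeLT] at this
          rcases eq_or_ne (Pc c) 0 with h0 | h0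
          · rw [h0, Polynomial.natDegree_zero]
            exact Nat.pos_of_ne_zero (NeZero.ne n)
          · rwa [← Polynomial.natDegree_lt_iff_degree_lt h0] at this
        rw [hh, Polynomial.natDegree_mul hg'ne hne, hdeg] at h1
        omega
    refine ⟨⟨h, hhm⟩, ?_⟩
    apply Subtype.ext
    funext i
    show ((g' : F[X]) * h).coeff (i : ℕ) = c i
    rw [← hh, Pc_coeff]
  have heq := (LinearEquiv.ofBijective ν ⟨hinj, hsurj⟩).finrank_eq
  rw [← heq, (Polynomial.degreeLTEquiv F (n - d)).finrank_eq, Module.finrank_fin_fun]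

lemma exists_nonvanishing (p : ℕ) (hp : p.Prime) [CharP F p] (hα : IsPrimitiveRoot α n)
    (hqcop : (Fintype.card F).Coprime n) {S : Finset (ZMod n)}
    (hS : QClosed (Fintype.card F) S) {t0 : ZMod n} (ht0 : t0 ∉ S) :
    ∃ c ∈ BS (F := F) α S, evalSum α c t0 ≠ 0 := by
  obtain ⟨g', hmon, hmap, hdeg⟩ := exists_gF p hp hα hqcop hS
  have hg'ne : g' ≠ 0 := hmon.ne_zero
  have hdlt : S.card < n := by
    have hss : S ⊂ Finset.univ :=
      Finset.ssubset_univ_iff.mpr (fun h => ht0 (h ▸ Finset.mem_univ t0))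
    have := Finset.card_lt_card hss
    rwa [Finset.card_univ, ZMod.card] at this
  have hg'mem : g' ∈ degreeLT F n := by
    rw [mem_degreeLT, Polynomial.degree_eq_natDegree hg'ne, hdeg, Nat.cast_lt]
    exact hdlt
  have hPc : Pc (fun i : Fin n => g'.coeff (i : ℕ)) = g' := Pc_recover _ hg'mem
  refine ⟨fun i : Fin n => g'.coeff (i : ℕ), ?_, ?_⟩
  · rw [mem_BS_iff_dvd hα, hPc, hmap]
  · rw [← eval_map_Pc hα, hPc, hmap]
    exact gS_eval_ne hα ht0

/-- The standard dot-product bilinear form. -/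
noncomputable def dotForm (F : Type) [Field F] (n : ℕ) :
    LinearMap.BilinForm F (Fin n → F) :=
  LinearMap.mk₂ F (fun x y => ∑ i, x i * y i)
    (fun x x' y => by simp [add_mul, Finset.sum_add_distrib])
    (fun a x y => by simp [Finset.mul_sum, mul_assoc])
    (fun x y y' => by simp [mul_add, Finset.sum_add_distrib])
    (fun a x y => by
      simp only [Pi.smul_apply, smul_eq_mul, Finset.mul_sum]
      exact Finset.sum_congr rfl fun i _ => by ring)

lemma dotForm_apply (x y : Fin n → F) : dotForm F n x y = ∑ i, x i * y i := rfl

lemma dotForm_isRefl : (dotForm F n).IsRefl := by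
  intro x y h
  rw [dotForm_apply] at h ⊢
  rw [← h]
  exact Finset.sum_congr rfl fun i _ => mul_comm _ _

lemma dotForm_nondeg : (dotForm F n).Nondegenerate := by
  refine LinearMap.BilinForm.Nondegenerate.ofSeparatingLeft ?_
  intro x h
  funext i
  have := h (Pi.single i 1)
  rw [dotForm_apply] at this
  classical
  rw [Finset.sum_eq_single i (fun j _ hji => by
      rw [Pi.single_apply, if_neg hji, mul_zero]) (fun hi => absurd (Finset.mem_univ i) hi)]
    at this
  rw [Pi.single_apply, if_pos rfl, mul_one] at this
  exact this

/-- The Euclidean dual as a submodule. -/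
noncomputable def dualSub (V : Submodule F (Fin n → F)) : Submodule F (Fin n → F) :=
  (dotForm F n).orthogonal V

lemma mem_dualSub {V : Submodule F (Fin n → F)} {x : Fin n → F} :
    x ∈ dualSub V ↔ ∀ y ∈ V, ∑ i, x i * y i = 0 := by
  constructor
  · intro h y hy
    have := h y hy
    rw [dotForm_apply] at this
    rw [← this]
    exact Finset.sum_congr rfl fun i _ => mul_comm _ _
  · intro h y hy
    have := h y hy
    rw [dotForm_apply]
    rw [← this]
    exact Finset.sum_congr rfl fun i _ => mul_comm _ _

lemma coe_dualSub (V : Submodule F (Fin n → F)) :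
    (dualSub V : Set (Fin n → F)) = euclDual (V : Set (Fin n → F)) := by
  ext x
  simp only [SetLike.mem_coe, mem_dualSub]
  rfl

lemma finrank_dualSub (V : Submodule F (Fin n → F)) :
    Module.finrank F (dualSub V) = n - Module.finrank F V := by
  rw [dualSub, LinearMap.BilinForm.finrank_orthogonal dotForm_nondeg V,
    Module.finrank_fin_fun]

/-- Dual of a cyclic code with `q`-closed defining set `S`. -/
lemma dualSub_BS (p : ℕ) (hp : p.Prime) [CharP F p] (hα : IsPrimitiveRoot α n)
    (hnE : (n : E) ≠ 0)
    (hqcop : (Fintype.card F).Coprime n) {S : Finset (ZMod n)}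
    (hS : QClosed (Fintype.card F) S) :
    dualSub (BS (F := F) α S) =
      BS α (Finset.univ \ S.image (fun s => -s)) := by
  classical
  have hT'q : QClosed (Fintype.card F) (Finset.univ \ S.image (fun s => -s)) :=
    QClosed.sdiff hqcop QClosed.univ hS.negImage
  have hle : BS (F := F) α (Finset.univ \ S.image (fun s => -s)) ≤ dualSub (BS α S) := by
    intro x hx
    rw [mem_dualSub]
    intro y hy
    have hkey := key_identity hα y x
    have hz : ∀ t : ZMod n, evalSum α y (-t) * evalSum α x t = 0 := by
      intro t
      by_cases ht : t ∈ Finset.univ \ S.image (fun s => -s)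
      · rw [hx t ht, mul_zero]
      · have : -t ∈ S := by
          simp only [Finset.mem_sdiff, Finset.mem_univ, true_and, not_not] at ht
          obtain ⟨s, hs, hst⟩ := Finset.mem_image.mp ht
          rwa [← hst, neg_neg]
        rw [hy (-t) this, zero_mul]
    rw [Finset.sum_congr rfl (fun t _ => hz t), Finset.sum_const_zero] at hkey
    have h2 : algebraMap F E (∑ i, y i * x i) = 0 := by
      rcases mul_eq_zero.mp hkey with h | h
      · exact absurd h hnE
      · exact h
    have h3 : (∑ i, y i * x i) = 0 := by
      apply (algebraMap F E).injective
      rw [h2, map_zero]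
    rw [← h3]
    exact Finset.sum_congr rfl fun i _ => mul_comm _ _
  refine (Submodule.eq_of_le_of_finrank_le hle ?_).symm
  rw [finrank_dualSub, finrank_BS p hp hα hqcop hS, finrank_BS p hp hα hqcop hT'q,
    Finset.card_sdiff_of_subset (Finset.subset_univ _), Finset.card_univ, ZMod.card,
    Finset.card_image_of_injective _ neg_injective]

lemma trSympForm_def (p : ℕ) [CharP F p] (u v : (Fin n → F) × (Fin n → F)) :
    trSympForm p u v = (letI := ZMod.algebra F p;
      Algebra.trace (ZMod p) F (∑ i, (v.1 i * u.2 i - u.1 i * v.2 i))) := rfl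

lemma trSympForm_eq_zero (p : ℕ) [CharP F p] {u v : (Fin n → F) × (Fin n → F)}
    (h : ∑ i, (v.1 i * u.2 i - u.1 i * v.2 i) = 0) : trSympForm p u v = 0 := by
  rw [trSympForm_def, h]
  exact map_zero _

lemma trace_kill (p : ℕ) (hp : p.Prime) [CharP F p] {s : F}
    (h : ∀ c : F, (letI := ZMod.algebra F p; Algebra.trace (ZMod p) F (c * s)) = 0) :
    s = 0 := by
  haveI : Fact p.Prime := ⟨hp⟩
  letI := ZMod.algebra F p
  haveI : FiniteDimensional (ZMod p) F := Module.Finite.of_finite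
  have hnd := traceForm_nondegenerate (ZMod p) F
  refine hnd.1 s (fun x => ?_)
  rw [Algebra.traceForm_apply, mul_comm]
  exact h x

lemma sympDual_prod (p : ℕ) (hp : p.Prime) [CharP F p] (V W : Submodule F (Fin n → F)) :
    sympDual p ((V.prod W : Submodule F ((Fin n → F) × (Fin n → F))) :
        Set ((Fin n → F) × (Fin n → F))) =
      (dualSub W : Set (Fin n → F)) ×ˢ (dualSub V : Set (Fin n → F)) := by
  classical
  ext v
  constructor
  · intro hv
    refine Set.mem_prod.mpr ⟨?_, ?_⟩
    · -- v.1 ∈ dualSub W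
      rw [SetLike.mem_coe, mem_dualSub]
      intro b hb
      refine trace_kill p hp (fun c => ?_)
      have hmem : ((0, (-c) • b) : (Fin n → F) × (Fin n → F)) ∈
          ((V.prod W : Submodule F _) : Set _) := by
        rw [SetLike.mem_coe, Submodule.mem_prod]
        exact ⟨V.zero_mem, W.smul_mem _ hb⟩
      have h0 := hv _ hmem
      rw [trSympForm_def] at h0
      convert h0 using 2
      rw [Finset.mul_sum]
      refine Finset.sum_congr rfl fun i _ => ?_
      simp only [Pi.zero_apply, Pi.smul_apply, smul_eq_mul, zero_mul, zero_sub]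
      ring
    · -- v.2 ∈ dualSub V
      rw [SetLike.mem_coe, mem_dualSub]
      intro a ha
      refine trace_kill p hp (fun c => ?_)
      have hmem : ((c • a, 0) : (Fin n → F) × (Fin n → F)) ∈
          ((V.prod W : Submodule F _) : Set _) := by
        rw [SetLike.mem_coe, Submodule.mem_prod]
        exact ⟨V.smul_mem _ ha, W.zero_mem⟩
      have h0 := hv _ hmem
      rw [trSympForm_def] at h0
      convert h0 using 2
      rw [Finset.mul_sum]
      refine Finset.sum_congr rfl fun i _ => ?_
      simp only [Pi.zero_apply, Pi.smul_apply, smul_eq_mul, mul_zero, sub_zero]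
      ring
  · intro hv w hw
    obtain ⟨h1, h2⟩ := Set.mem_prod.mp hv
    rw [SetLike.mem_coe, mem_dualSub] at h1 h2
    rw [SetLike.mem_coe, Submodule.mem_prod] at hw
    refine trSympForm_eq_zero p ?_
    rw [Finset.sum_sub_distrib]
    have ha : ∑ i, w.1 i * v.2 i = 0 := by
      rw [← h2 w.1 hw.1]
      exact Finset.sum_congr rfl fun i _ => mul_comm _ _
    have hb : ∑ i, v.1 i * w.2 i = 0 := h1 w.2 hw.2
    rw [ha, hb, sub_zero]

lemma ncard_submodule {M : Type} [AddCommGroup M] [Module F M] [Finite M]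
    (V : Submodule F M) :
    Nat.card V = Fintype.card F ^ Module.finrank F V := by
  haveI : Fintype V := Fintype.ofFinite V
  rw [Nat.card_eq_fintype_card]
  exact Module.card_eq_pow_finrank

lemma ncard_setProd {X Y : Type} (A : Set X) (B : Set Y) :
    Nat.card ((A ×ˢ B) : Set (X × Y)) = Nat.card A * Nat.card B := by
  rw [Nat.card_congr (Equiv.Set.prod A B), Nat.card_prod]

lemma minSwt_prod_eq (Dd C : Submodule F (Fin n → F))
    (hne : (((Dd : Set (Fin n → F))) \ (C : Set (Fin n → F))).Nonempty) :
    minSwt (((Dd : Set (Fin n → F)) ×ˢ (Dd : Set (Fin n → F))) \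
        ((C : Set (Fin n → F)) ×ˢ (C : Set (Fin n → F)))) =
      minHwt ((Dd : Set (Fin n → F)) \ (C : Set (Fin n → F))) := by
  classical
  rw [minSwt, minHwt]
  have h0C : (0 : Fin n → F) ∈ (C : Set (Fin n → F)) := C.zero_mem
  have hA : (((Dd : Set (Fin n → F)) \ C) \ {0}) = ((Dd : Set (Fin n → F)) \ C) :=
    Set.diff_singleton_eq_self (fun h => h.2 h0C)
  have hB : ((((Dd : Set (Fin n → F)) ×ˢ (Dd : Set (Fin n → F))) \
      ((C : Set (Fin n → F)) ×ˢ (C : Set (Fin n → F)))) \ {0}) =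
      (((Dd : Set (Fin n → F)) ×ˢ (Dd : Set (Fin n → F))) \
      ((C : Set (Fin n → F)) ×ˢ (C : Set (Fin n → F)))) :=
    Set.diff_singleton_eq_self (fun h => h.2 (Set.mem_prod.mpr ⟨h0C, h0C⟩))
  rw [hA, hB]
  have hswt_single : ∀ u : Fin n → F, swt ((u, 0) : (Fin n → F) × (Fin n → F)) = hwt u := by
    intro u
    rw [swt, hwt]
    congr 1
    ext i
    simp
  have hsub : (hwt '' ((Dd : Set (Fin n → F)) \ C)) ⊆
      (swt '' ((((Dd : Set (Fin n → F)) ×ˢ (Dd : Set (Fin n → F))) \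
        ((C : Set (Fin n → F)) ×ˢ (C : Set (Fin n → F)))))) := by
    rintro a ⟨u, hu, rfl⟩
    refine ⟨(u, 0), ⟨Set.mem_prod.mpr ⟨hu.1, Dd.zero_mem⟩, fun hc => hu.2 hc.1⟩, hswt_single u⟩
  have hAne : (hwt '' ((Dd : Set (Fin n → F)) \ C)).Nonempty := hne.image _
  have hBne := hAne.mono hsub
  refine le_antisymm (Nat.sInf_le (hsub (Nat.sInf_mem hAne))) ?_
  obtain ⟨⟨u, v⟩, hm, hval⟩ := Nat.sInf_mem hBne
  obtain ⟨hP, hCC⟩ := hm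
  obtain ⟨hu, hv⟩ := Set.mem_prod.mp hP
  have hwt_le : ∀ w : Fin n → F, (w = u ∨ w = v) → hwt w ≤ swt (u, v) := by
    rintro w (rfl | rfl)
    · exact Set.ncard_le_ncard (fun i hi hc => hi hc.1) (Set.toFinite _)
    · exact Set.ncard_le_ncard (fun i hi hc => hi hc.2) (Set.toFinite _)
  rw [← hval]
  by_cases huC : u ∈ (C : Set (Fin n → F))
  · have hvC : v ∉ (C : Set (Fin n → F)) := fun hc => hCC ⟨huC, hc⟩
    exact le_trans (Nat.sInf_le ⟨v, ⟨hv, hvC⟩, rfl⟩) (hwt_le v (Or.inr rfl))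
  · exact le_trans (Nat.sInf_le ⟨u, ⟨hu, huC⟩, rfl⟩) (hwt_le u (Or.inl rfl))
end CycAux


open CycAux

/-- Cyclic subsystem codes, Euclidean case.
Let `D` be a `k`-dimensional self-orthogonal cyclic code of length `n` over `F_q`
with `gcd(n,q) = 1`, with defining sets `T_D` and `T_{D^⊥}` for `D` and `D^⊥`
(w.r.t. a primitive `n`-th root of unity `α`).  If `T ⊆ T_D \ T_{D^⊥}` is a
union of cyclotomic cosets and `C` is the cyclic code with defining set
`T_C = T_D \ (T ∪ T^{−1})`, and `r = |T ∪ T^{−1}|` satisfies `0 ≤ r < n − 2k`,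
then `C ∩ C^⊥ = D`, `dim C = k + r`, and there exists an
`[[n, n−2k−r, r, wt(D^⊥ \ C)]]_q` Clifford subsystem code. -/
theorem cyclic_subsystem_codes_euclidean
    (p : ℕ) (hp : p.Prime) (F : Type) [Field F] [Fintype F] [CharP F p]
    (n k r : ℕ) (hn : 0 < n) (hgcd : Nat.gcd n (Fintype.card F) = 1)
    (E : Type) [Field E] [Algebra F E] (α : E) (hα : IsPrimitiveRoot α n)
    (D C : Submodule F (Fin n → F)) (TD TDperp T : Finset (ZMod n))
    -- `T_D` and `T` are unions of cyclotomic cosets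
    (hTDcl : ∀ t ∈ TD, (Fintype.card F : ZMod n) * t ∈ TD)
    (hTcl : ∀ t ∈ T, (Fintype.card F : ZMod n) * t ∈ T)
    -- `T_D` is the defining set of `D`
    (hDdef : ∀ c : Fin n → F, c ∈ D ↔
      ∀ t ∈ TD, ∑ i : Fin n, algebraMap F E (c i) * α ^ (t * ((i : ℕ) : ZMod n)).val = 0)
    -- `T_{D^⊥}` is the defining set of `D^⊥`
    (hDperpdef : ∀ c : Fin n → F, c ∈ euclDual (↑D : Set (Fin n → F)) ↔
      ∀ t ∈ TDperp, ∑ i : Fin n, algebraMap F E (c i) * α ^ (t * ((i : ℕ) : ZMod n)).val = 0)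
    -- `D` is self-orthogonal and `k`-dimensional
    (hso : (↑D : Set (Fin n → F)) ⊆ euclDual ↑D)
    (hk : Module.finrank F D = k)
    (hT : T ⊆ TD \ TDperp)
    -- `C` is the cyclic code with defining set `T_C = T_D \ (T ∪ T^{−1})`
    (hCdef : ∀ c : Fin n → F, c ∈ C ↔
      ∀ t ∈ TD \ (T ∪ T.image (fun s => -s)),
        ∑ i : Fin n, algebraMap F E (c i) * α ^ (t * ((i : ℕ) : ZMod n)).val = 0)
    (hr : r = (T ∪ T.image (fun s => -s)).card) (hrlt : r < n - 2 * k) :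
    (↑C ∩ euclDual ↑C : Set (Fin n → F)) = ↑D ∧
    Module.finrank F C = k + r ∧
    ∃ Q : AddSubgroup ((Fin n → F) × (Fin n → F)),
      IsSubsysCode p Q (Fintype.card F ^ (n - 2 * k - r)) (Fintype.card F ^ r)
        (minHwt (euclDual (↑D : Set (Fin n → F)) \ ↑C)) := by
  classical
  haveI : NeZero n := ⟨hn.ne'⟩
  haveI : CharP E p := charP_of_injective_algebraMap (algebraMap F E).injective p
  set q : ℕ := Fintype.card F with hqdef
  have hqcop : q.Coprime n := Nat.coprime_comm.mp hgcd
  obtain ⟨m, _, hcard⟩ := FiniteField.card F p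
  have hpq : p ∣ q := by
    rw [hqdef, hcard]
    exact dvd_pow_self p m.2.ne'
  have hnE : (n : E) ≠ 0 := by
    intro h0
    have hdvd : p ∣ n := (CharP.cast_eq_zero_iff E p n).mp h0
    have h1 : p ∣ Nat.gcd n q := Nat.dvd_gcd hdvd hpq
    rw [hgcd] at h1
    exact hp.one_lt.ne' (Nat.dvd_one.mp h1)
  -- identifications with cyclic codes
  have hD_eq : D = BS α TD := SetLike.ext fun c => (hDdef c).trans Iff.rfl
  have hC_eq : C = BS α (TD \ (T ∪ T.image (fun s => -s))) :=
    SetLike.ext fun c => (hCdef c).trans Iff.rfl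
  set A : Finset (ZMod n) := T ∪ T.image (fun s => -s) with hAdef
  set TC : Finset (ZMod n) := TD \ A with hTCdef
  set T'' : Finset (ZMod n) := Finset.univ \ TD.image (fun s => -s) with hT''def
  have hTDq : QClosed q TD := hTDcl
  have hTq : QClosed q T := hTcl
  have hAq : QClosed q A := hTq.union hTq.negImage
  have hTCq : QClosed q TC := QClosed.sdiff hqcop hTDq hAq
  have hT''q : QClosed q T'' := QClosed.sdiff hqcop QClosed.univ hTDq.negImage
  have hmem_negimg : ∀ (S : Finset (ZMod n)) (x : ZMod n),
      x ∈ S.image (fun s => -s) ↔ -x ∈ S := by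
    intro S x
    constructor
    · intro h
      obtain ⟨s, hs, hsx⟩ := Finset.mem_image.mp h
      rw [← hsx, neg_neg]; exact hs
    · intro h
      exact Finset.mem_image.mpr ⟨-x, h, neg_neg x⟩
  have hcardTD_le : TD.card ≤ n := by
    have := Finset.card_le_univ TD
    rwa [ZMod.card] at this
  have hkTD : n - TD.card = k := by
    rw [← finrank_BS p hp hα hqcop hTDq, ← hD_eq]
    exact hk
  -- dual of D
  have hDd_eq : dualSub D = BS α T'' := by
    rw [hD_eq]
    exact dualSub_BS p hp hα hnE hqcop hTDq
  have hDdual_set : euclDual (D : Set (Fin n → F)) = (dualSub D : Set (Fin n → F)) :=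
    (coe_dualSub D).symm
  -- T'' ⊆ TD (self-orthogonality)
  have hT''sub : T'' ⊆ TD := by
    intro t ht
    by_contra htD
    obtain ⟨c, hc, hcne⟩ := exists_nonvanishing p hp hα hqcop hTDq htD
    have hcD : c ∈ D := by rw [hD_eq]; exact hc
    have hcDd : c ∈ BS α T'' := by
      rw [← hDd_eq, ← SetLike.mem_coe, coe_dualSub]
      exact hso hcD
    exact hcne (hcDd t ht)
  -- TDperp ⊆ T''
  have hTDperp_sub : TDperp ⊆ T'' := by
    intro s hs
    by_contra hsT
    obtain ⟨c, hc, hcne⟩ := exists_nonvanishing p hp hα hqcop hT''q hsT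
    have hcd : c ∈ euclDual (D : Set (Fin n → F)) := by
      rw [hDdual_set, SetLike.mem_coe, hDd_eq]
      exact hc
    exact hcne ((hDperpdef c).mp hcd s hs)
  -- T ⊆ TD.image neg
  have hTsub' : ∀ t ∈ T, t ∈ TD.image (fun s => -s) := by
    intro t ht
    by_contra htn
    have htT'' : t ∈ T'' := Finset.mem_sdiff.mpr ⟨Finset.mem_univ t, htn⟩
    have hS0q : QClosed q (T'' \ T) := QClosed.sdiff hqcop hT''q hTq
    have hTDperpS0 : TDperp ⊆ T'' \ T := by
      intro s hs
      refine Finset.mem_sdiff.mpr ⟨hTDperp_sub hs, fun hsT => ?_⟩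
      exact (Finset.mem_sdiff.mp (hT hsT)).2 hs
    have hBSle : BS (F := F) α (T'' \ T) ≤ BS α T'' := by
      intro c hc
      rw [← hDd_eq, ← SetLike.mem_coe, coe_dualSub]
      exact (hDperpdef c).mpr (fun s hs => hc s (hTDperpS0 hs))
    have hfr := Submodule.finrank_mono hBSle
    rw [finrank_BS p hp hα hqcop hS0q, finrank_BS p hp hα hqcop hT''q] at hfr
    have hcards : (T'' \ T).card < T''.card := by
      refine Finset.card_lt_card ?_
      rw [Finset.ssubset_iff_of_subset Finset.sdiff_subset]
      exact ⟨t, htT'', fun hc => (Finset.mem_sdiff.mp hc).2 ht⟩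
    have hT''le : T''.card ≤ n := by
      have := Finset.card_le_univ T''
      rwa [ZMod.card] at this
    omega
  have hAsubTD : A ⊆ TD := by
    intro x hx
    rcases Finset.mem_union.mp hx with h1 | h1
    · exact (Finset.mem_sdiff.mp (hT h1)).1
    · obtain ⟨t, htT, rfl⟩ := Finset.mem_image.mp h1
      have h2 := (hmem_negimg TD t).mp (hTsub' t htT)
      exact h2
  have hAsymm : ∀ x ∈ A, -x ∈ A := by
    intro x hx
    rcases Finset.mem_union.mp hx with h1 | h1
    · exact Finset.mem_union_right _ (Finset.mem_image.mpr ⟨x, h1, rfl⟩)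
    · obtain ⟨t, htT, rfl⟩ := Finset.mem_image.mp h1
      rw [neg_neg]
      exact Finset.mem_union_left _ htT
  have hAcard_le : A.card ≤ TD.card := Finset.card_le_card hAsubTD
  have hTCcard : TC.card = TD.card - A.card := Finset.card_sdiff_of_subset hAsubTD
  -- finrank C
  have hfrC : Module.finrank F C = k + r := by
    rw [hC_eq, finrank_BS p hp hα hqcop hTCq, hTCcard, ← hr]
    omega
  -- dual of C
  have hCd_eq : dualSub C = BS α (Finset.univ \ TC.image (fun s => -s)) := by
    rw [hC_eq]
    exact dualSub_BS p hp hα hnE hqcop hTCq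
  have hmemTC' : ∀ x : ZMod n, x ∈ Finset.univ \ TC.image (fun s => -s) ↔ -x ∉ TC := by
    intro x
    rw [Finset.mem_sdiff]
    simp only [Finset.mem_univ, true_and]
    rw [hmem_negimg TC x]
  -- C ∩ C^⊥ = D
  have hDinter : C ⊓ dualSub C = D := by
    rw [hCd_eq, hC_eq, hD_eq]
    apply le_antisymm
    · intro c hc
      obtain ⟨hc1, hc2⟩ := Submodule.mem_inf.mp hc
      intro t htTD
      by_cases htA : t ∈ A
      · refine hc2 t ((hmemTC' t).mpr ?_)
        intro hcon
        exact (Finset.mem_sdiff.mp hcon).2 (hAsymm t htA)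
      · exact hc1 t (Finset.mem_sdiff.mpr ⟨htTD, htA⟩)
    · intro c hc
      rw [Submodule.mem_inf]
      constructor
      · intro t ht
        exact hc t (Finset.mem_sdiff.mp ht).1
      · intro t ht
        have h1 : -t ∉ TC := (hmemTC' t).mp ht
        by_cases h2 : -t ∈ TD
        · have h3 : -t ∈ A := by
            by_contra h4
            exact h1 (Finset.mem_sdiff.mpr ⟨h2, h4⟩)
          have h5 : t ∈ A := by
            have := hAsymm _ h3
            rwa [neg_neg] at this
          exact hc t (hAsubTD h5)
        · have h6 : t ∈ T'' := by
            refine Finset.mem_sdiff.mpr ⟨Finset.mem_univ t, fun hc' => ?_⟩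
            exact h2 ((hmem_negimg TD t).mp hc')
          exact hc t (hT''sub h6)
  have hCset : (↑C ∩ euclDual ↑C : Set (Fin n → F)) = ↑D := by
    rw [← coe_dualSub C, ← hDinter]
    rfl
  -- C ≤ D^⊥
  have hT''subTC : T'' ⊆ TC := by
    intro x hx
    refine Finset.mem_sdiff.mpr ⟨hT''sub hx, fun hxA => ?_⟩
    have h1 : -x ∈ TD := hAsubTD (hAsymm x hxA)
    exact (Finset.mem_sdiff.mp hx).2 ((hmem_negimg TD x).mpr h1)
  have hCleDd : C ≤ dualSub D := by
    rw [hC_eq, hDd_eq]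
    exact BS_anti hT''subTC
  have hfrDd : Module.finrank F (dualSub D) = n - k := by
    rw [finrank_dualSub, hk]
  have hnonempty : ((dualSub D : Set (Fin n → F)) \ (C : Set (Fin n → F))).Nonempty := by
    rw [Set.nonempty_iff_ne_empty]
    intro hempty
    have hsub2 : dualSub D ≤ C := by
      intro x hx
      by_contra hxC
      exact Set.eq_empty_iff_forall_notMem.mp hempty x ⟨hx, hxC⟩
    have heq2 := le_antisymm hCleDd hsub2
    rw [← heq2] at hfrDd
    rw [hfrC] at hfrDd
    omega
  refine ⟨hCset, hfrC, (C.prod C).toAddSubgroup, ?_⟩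
  -- set-level facts
  have hprodset : ∀ V W : Submodule F (Fin n → F),
      ((V.prod W : Submodule F ((Fin n → F) × (Fin n → F))) :
        Set ((Fin n → F) × (Fin n → F))) =
      (V : Set (Fin n → F)) ×ˢ (W : Set (Fin n → F)) := by
    intro V W
    ext ⟨a, b⟩
    simp [Submodule.mem_prod, Set.mem_prod]
  have hQgset : (((C.prod C).toAddSubgroup : AddSubgroup ((Fin n → F) × (Fin n → F))) :
      Set ((Fin n → F) × (Fin n → F))) = (C : Set (Fin n → F)) ×ˢ (C : Set (Fin n → F)) :=
    hprodset C C
  have hsympCC : sympDual p ((C : Set (Fin n → F)) ×ˢ (C : Set (Fin n → F))) =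
      (dualSub C : Set (Fin n → F)) ×ˢ (dualSub C : Set (Fin n → F)) := by
    rw [← hprodset C C]
    exact sympDual_prod p hp C C
  have hCDset : (C : Set (Fin n → F)) ∩ (dualSub C : Set (Fin n → F)) =
      (D : Set (Fin n → F)) := by
    rw [← hDinter]
    rfl
  have hDsSet : ((((C.prod C).toAddSubgroup : AddSubgroup _) :
        Set ((Fin n → F) × (Fin n → F))) ∩
      sympDual p (((C.prod C).toAddSubgroup : AddSubgroup _) : Set _)) =
      (D : Set (Fin n → F)) ×ˢ (D : Set (Fin n → F)) := by
    rw [hQgset, hsympCC, Set.prod_inter_prod, hCDset]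
  have hsympDD : sympDual p ((D : Set (Fin n → F)) ×ˢ (D : Set (Fin n → F))) =
      (dualSub D : Set (Fin n → F)) ×ˢ (dualSub D : Set (Fin n → F)) := by
    rw [← hprodset D D]
    exact sympDual_prod p hp D D
  have hcardD : Nat.card ((D : Set (Fin n → F))) = q ^ k := by
    have h1 : Nat.card ((D : Set (Fin n → F))) = Nat.card D := rfl
    rw [h1, ncard_submodule D, hk]
  have hcardC : Nat.card ((C : Set (Fin n → F))) = q ^ (k + r) := by
    have h1 : Nat.card ((C : Set (Fin n → F))) = Nat.card C := rfl
    rw [h1, ncard_submodule C, hfrC]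
  show Nat.card (((((C.prod C).toAddSubgroup : AddSubgroup _) : Set _) ∩
        sympDual p (((C.prod C).toAddSubgroup : AddSubgroup _) : Set _) :
        Set ((Fin n → F) × (Fin n → F)))) *
      (q ^ (n - 2 * k - r) * q ^ r) = q ^ n ∧
    Nat.card ((C.prod C).toAddSubgroup) * q ^ (n - 2 * k - r) = q ^ n * q ^ r ∧
    _ ∧ _
  refine ⟨?_, ?_, ?_, ?_⟩
  · rw [Nat.card_congr (Equiv.setCongr hDsSet), ncard_setProd, hcardD, ← pow_add, ← pow_add,
      ← pow_add]
    congr 1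
    omega
  · have h1 : Nat.card ((C.prod C).toAddSubgroup) =
        Nat.card (((C : Set (Fin n → F)) ×ˢ (C : Set (Fin n → F)) :
          Set ((Fin n → F) × (Fin n → F)))) := Nat.card_congr (Equiv.setCongr hQgset)
    rw [h1, ncard_setProd, hcardC, ← pow_add, ← pow_add, ← pow_add]
    congr 1
    omega
  · intro heq
    exfalso
    rw [hDsSet, hsympDD, hQgset] at heq
    have hDdC : dualSub D = C := by
      ext x
      constructor
      · intro hx
        have hmem : ((x, 0) : (Fin n → F) × (Fin n → F)) ∈
            (dualSub D : Set (Fin n → F)) ×ˢ (dualSub D : Set (Fin n → F)) :=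
          ⟨hx, (dualSub D).zero_mem⟩
        rw [heq] at hmem
        exact hmem.1
      · intro hx
        have hmem : ((x, 0) : (Fin n → F) × (Fin n → F)) ∈
            (C : Set (Fin n → F)) ×ˢ (C : Set (Fin n → F)) := ⟨hx, C.zero_mem⟩
        rw [← heq] at hmem
        exact hmem.1
    rw [hDdC, hfrC] at hfrDd
    omega
  · intro _
    rw [hDsSet, hsympDD, hQgset, hDdual_set]
    exact (minSwt_prod_eq (dualSub D) C hnonempty).symm
end

section
/- Trading subsystem dimension for co-subsystem dimension: Let q be a power of a prime p. If there exists an ((n,K,R,d))_q Clifford subsystem code with K > p that is pure to d', then there exists an ((n, K/p, pR, d_m))_q Clifford subsystem code with d_m ≥ d that is pure to min{d, d'}. Moreover, if a pure ((n,p,R,d))_q Clifford subsystem code exists, then there exists an ((n,1,pR,d))_q Clifford subsystem code. -/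
open Finset

section Dev
attribute [local instance] ZMod.algebra
open LinearMap Module Submodule

variable (p : ℕ) [Fact p.Prime] {F : Type} [Field F] [Fintype F] [CharP F p] {n : ℕ}

noncomputable def Bf : LinearMap.BilinForm (ZMod p) ((Fin n → F) × (Fin n → F)) :=
  LinearMap.mk₂ (ZMod p) (fun u v => trSympForm p u v)
    (by intro m₁ m₂ v
        show Algebra.trace (ZMod p) F _ = Algebra.trace (ZMod p) F _ + Algebra.trace (ZMod p) F _
        rw [← map_add]
        congr 1
        rw [← Finset.sum_add_distrib]
        congr 1; ext i; simp [Prod.fst_add, Prod.snd_add]; ring)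
    (by intro c m v
        show Algebra.trace (ZMod p) F _ = c • Algebra.trace (ZMod p) F _
        rw [← map_smul]
        congr 1
        rw [Finset.smul_sum]
        congr 1; ext i
        simp only [Prod.smul_fst, Prod.smul_snd, Pi.smul_apply, Algebra.smul_def (A := F)]
        ring)
    (by intro m v₁ v₂
        show Algebra.trace (ZMod p) F _ = Algebra.trace (ZMod p) F _ + Algebra.trace (ZMod p) F _
        rw [← map_add]
        congr 1
        rw [← Finset.sum_add_distrib]
        congr 1; ext i; simp [Prod.fst_add, Prod.snd_add]; ring)
    (by intro c m v
        show Algebra.trace (ZMod p) F _ = c • Algebra.trace (ZMod p) F _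
        rw [← map_smul]
        congr 1
        rw [Finset.smul_sum]
        congr 1; ext i
        simp only [Prod.smul_fst, Prod.smul_snd, Pi.smul_apply, Algebra.smul_def (A := F)]
        ring)

lemma Bf_apply (u v : (Fin n → F) × (Fin n → F)) : Bf p u v = trSympForm p u v := rfl

lemma Bf_skew (u v : (Fin n → F) × (Fin n → F)) : Bf p u v = - Bf p v u := by
  show Algebra.trace (ZMod p) F _ = - Algebra.trace (ZMod p) F _
  rw [← map_neg]
  congr 1
  rw [← Finset.sum_neg_distrib]
  congr 1; ext i; ring

lemma Bf_refl : (Bf p (F := F) (n := n)).IsRefl := by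
  intro u v h
  rw [Bf_skew, h, neg_zero]

lemma Bf_alt (u : (Fin n → F) × (Fin n → F)) : Bf p u u = 0 := by
  show Algebra.trace (ZMod p) F _ = 0
  have : (∑ i, (u.1 i * u.2 i - u.1 i * u.2 i)) = 0 := by simp
  rw [this, map_zero]

lemma Bf_nondeg : (Bf p (F := F) (n := n)).Nondegenerate := by
  refine (LinearMap.IsRefl.nondegenerate_iff_separatingLeft (B := Bf p (F := F) (n := n)) (Bf_refl p)).mpr ?_
  intro u hu
  by_contra h0
  obtain ⟨s, hs⟩ := Algebra.trace_surjective (ZMod p) F 1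
  have h1 : (1 : ZMod p) ≠ 0 := one_ne_zero
  have : u.1 ≠ 0 ∨ u.2 ≠ 0 := by
    by_contra hc
    push_neg at hc
    exact h0 (Prod.ext hc.1 hc.2)
  rcases this with h | h
  · obtain ⟨j, hj⟩ := Function.ne_iff.mp h
    have := hu (0, Pi.single j (- (u.1 j)⁻¹ * s))
    rw [Bf_apply, trSympForm] at this
    simp only at this
    rw [Finset.sum_eq_single j] at this
    · simp only [Pi.zero_apply, zero_mul, zero_sub, Pi.single_eq_same] at this
      rw [show -(u.1 j * (-(u.1 j)⁻¹ * s)) = u.1 j * (u.1 j)⁻¹ * s by ring,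
        mul_inv_cancel₀ hj, one_mul, hs] at this
      exact h1 this
    · intro i _ hij
      simp [Pi.single_eq_of_ne hij]
    · simp
  · obtain ⟨j, hj⟩ := Function.ne_iff.mp h
    have := hu (Pi.single j ((u.2 j)⁻¹ * s), 0)
    rw [Bf_apply, trSympForm] at this
    simp only at this
    rw [Finset.sum_eq_single j] at this
    · simp only [Pi.zero_apply, mul_zero, sub_zero, Pi.single_eq_same] at this
      rw [show (u.2 j)⁻¹ * s * u.2 j = u.2 j * (u.2 j)⁻¹ * s by ring,
        mul_inv_cancel₀ hj, one_mul, hs] at this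
      exact h1 this
    · intro i _ hij
      simp [Pi.single_eq_of_ne hij]
    · simp

end Dev

section Dev2
attribute [local instance] ZMod.algebra
open LinearMap Module Submodule

variable (p : ℕ) [Fact p.Prime] {F : Type} [Field F] [Fintype F] [CharP F p] {n : ℕ}

local notation "V" => (Fin n → F) × (Fin n → F)

lemma sympDual_coe (W : Submodule (ZMod p) V) :
    sympDual p (W : Set V) = ((Bf p).orthogonal W : Set V) := by
  ext v
  constructor
  · intro hv w hw
    exact Bf_refl p v w (hv w hw)
  · intro hv w hw
    exact Bf_refl p w v (hv w hw)

lemma card_submodule (W : Submodule (ZMod p) V) :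
    Nat.card W = p ^ Module.finrank (ZMod p) W := by
  haveI : Fintype W := Fintype.ofFinite W
  rw [Nat.card_eq_fintype_card, card_eq_pow_finrank (K := ZMod p), ZMod.card]

lemma card_coe_set (W : Submodule (ZMod p) V) :
    Nat.card ((W : Set V)) = Nat.card W := rfl

lemma card_V : Nat.card ((Fin n → F) × (Fin n → F)) = Fintype.card F ^ n * Fintype.card F ^ n := by
  rw [Nat.card_eq_fintype_card, Fintype.card_prod, Fintype.card_fun, Fintype.card_fin]

lemma pow_finrank_V :
    p ^ Module.finrank (ZMod p) ((Fin n → F) × (Fin n → F)) =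
      Fintype.card F ^ n * Fintype.card F ^ n := by
  rw [← card_V, ← finrank_top (ZMod p), ← card_submodule p (⊤ : Submodule (ZMod p) V)]
  exact Nat.card_congr Submodule.topEquiv.toEquiv

lemma card_mul_card_orth (W : Submodule (ZMod p) V) :
    Nat.card W * Nat.card ((Bf p).orthogonal W) =
      Fintype.card F ^ n * Fintype.card F ^ n := by
  rw [card_submodule, card_submodule, ← pow_add,
    LinearMap.BilinForm.finrank_orthogonal (Bf_nondeg p),
    Nat.add_sub_cancel' W.finrank_le, pow_finrank_V]

lemma finrank_sup_span (W : Submodule (ZMod p) V) (x : V) (hx : x ∉ W) :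
    Module.finrank (ZMod p) ↥(W ⊔ span (ZMod p) {x}) = Module.finrank (ZMod p) W + 1 := by
  have hx0 : x ≠ 0 := by rintro rfl; exact hx W.zero_mem
  have hinf : W ⊓ span (ZMod p) {x} = ⊥ := by
    rw [eq_bot_iff]
    rintro v ⟨hv1, hv2⟩
    obtain ⟨a, rfl⟩ := Submodule.mem_span_singleton.mp hv2
    rcases eq_or_ne a 0 with rfl | ha
    · simp
    · exact absurd (by simpa [smul_smul, inv_mul_cancel₀ ha] using W.smul_mem a⁻¹ hv1) hx
  have := Submodule.finrank_sup_add_finrank_inf_eq W (span (ZMod p) {x})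
  rw [hinf, finrank_bot, add_zero, finrank_span_singleton hx0] at this
  omega

end Dev2

section Dev3
attribute [local instance] ZMod.algebra
open LinearMap Module Submodule

variable (p : ℕ) [Fact p.Prime] {F : Type} [Field F] [Fintype F] [CharP F p] {n : ℕ}

local notation "V" => (Fin n → F) × (Fin n → F)

lemma key_construction (C : Submodule (ZMod p) V) (h : ¬ ((Bf p).orthogonal C ≤ C)) :
    ∃ C' : Submodule (ZMod p) V,
      C ≤ C' ∧
      C' ≤ (Bf p).orthogonal (C ⊓ (Bf p).orthogonal C) ∧
      C' ⊓ (Bf p).orthogonal C' = C ⊓ (Bf p).orthogonal C ∧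
      Module.finrank (ZMod p) C' = Module.finrank (ZMod p) C + 2 := by
  obtain ⟨x, hxO, hxC⟩ := SetLike.not_le_iff_exists.mp h
  have hxC' : x ∉ (Bf p).orthogonal ((Bf p).orthogonal C) := by
    rwa [LinearMap.BilinForm.orthogonal_orthogonal (Bf_nondeg p) (Bf_refl p) C]
  rw [LinearMap.BilinForm.mem_orthogonal_iff] at hxC'
  push_neg at hxC'
  obtain ⟨y, hyO, hyx⟩ := hxC'
  set B := Bf p (F := F) (n := n) with hB
  have hBcx : ∀ c ∈ C, B c x = 0 := fun c hc => hxO c hc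
  have hBcy : ∀ c ∈ C, B c y = 0 := fun c hc => hyO c hc
  have hBxc : ∀ c ∈ C, B x c = 0 := fun c hc => Bf_refl p _ _ (hBcx c hc)
  have hByc : ∀ c ∈ C, B y c = 0 := fun c hc => Bf_refl p _ _ (hBcy c hc)
  have hBxx : B x x = 0 := Bf_alt p x
  have hByy : B y y = 0 := Bf_alt p y
  have hByx : B y x ≠ 0 := hyx
  have hBxy : B x y ≠ 0 := fun hc => hyx (Bf_refl p _ _ hc)
  set C' : Submodule (ZMod p) V := (C ⊔ span (ZMod p) {x}) ⊔ span (ZMod p) {y} with hC'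
  have hdec : ∀ z ∈ C', ∃ c ∈ C, ∃ a b : ZMod p, z = c + a • x + b • y := by
    intro z hz
    obtain ⟨w, hw, sy, hsy, rfl⟩ := Submodule.mem_sup.mp hz
    obtain ⟨c, hc, sx, hsx, rfl⟩ := Submodule.mem_sup.mp hw
    obtain ⟨a, rfl⟩ := Submodule.mem_span_singleton.mp hsx
    obtain ⟨b, rfl⟩ := Submodule.mem_span_singleton.mp hsy
    exact ⟨c, hc, a, b, rfl⟩
  have hCC' : C ≤ C' := le_trans le_sup_left le_sup_left
  have hxmem : x ∈ C' := by
    rw [hC']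
    exact Submodule.mem_sup_left (Submodule.mem_sup_right (Submodule.mem_span_singleton_self x))
  have hymem : y ∈ C' := by
    rw [hC']
    exact Submodule.mem_sup_right (Submodule.mem_span_singleton_self y)
  have hBval : ∀ (u : V), ∀ c a b, B u (c + a • x + b • y) = B u c + a * B u x + b * B u y := by
    intro u c a b
    rw [map_add, map_add, map_smul, map_smul]; rfl
  have hBval' : ∀ (u : V), ∀ c a b, B (c + a • x + b • y) u = B c u + a * B x u + b * B y u := by
    intro u c a b
    rw [map_add, map_add, LinearMap.add_apply, LinearMap.add_apply,
      map_smul, map_smul, LinearMap.smul_apply, LinearMap.smul_apply]; rfl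
  have hleOD : C' ≤ (Bf p).orthogonal (C ⊓ (Bf p).orthogonal C) := by
    intro w hw
    obtain ⟨c, hc, a, b, rfl⟩ := hdec w hw
    intro u hu
    rw [hBval]
    have h1 : B u c = 0 := Bf_refl p _ _ (hu.2 c hc)
    have h2 : B u x = 0 := hxO u hu.1
    have h3 : B u y = 0 := hyO u hu.1
    rw [h1, h2, h3]; ring
  have hinf : C' ⊓ (Bf p).orthogonal C' = C ⊓ (Bf p).orthogonal C := by
    ext z
    constructor
    · rintro ⟨hz1, hz2⟩
      obtain ⟨c, hc, a, b, rfl⟩ := hdec _ hz1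
      have hx0 : B x (c + a • x + b • y) = 0 := hz2 x hxmem
      have hy0 : B y (c + a • x + b • y) = 0 := hz2 y hymem
      rw [hBval, hBxc c hc, hBxx] at hx0
      have hb : b = 0 := by
        have : b * B x y = 0 := by linear_combination hx0
        rcases mul_eq_zero.mp this with h | h
        · exact h
        · exact absurd h hBxy
      have ha : a = 0 := by
        rw [hBval, hByc c hc, hByy] at hy0
        have : a * B y x = 0 := by linear_combination hy0
        rcases mul_eq_zero.mp this with h | h
        · exact h
        · exact absurd h hByx
      subst ha; subst hb
      simp only [zero_smul, add_zero] at hz2 ⊢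
      refine ⟨hc, ?_⟩
      exact LinearMap.BilinForm.orthogonal_le hCC' hz2
    · rintro ⟨hz1, hz2⟩
      refine ⟨hCC' hz1, ?_⟩
      intro w hw
      obtain ⟨c, hc, a, b, rfl⟩ := hdec _ hw
      rw [hBval']
      have h1 : B c z = 0 := hz2 c hc
      have h2 : B x z = 0 := Bf_refl p _ _ (hBcx z hz1)
      have h3 : B y z = 0 := Bf_refl p _ _ (hBcy z hz1)
      rw [h1, h2, h3]; ring
  have hyCx : y ∉ C ⊔ span (ZMod p) {x} := by
    intro hy
    obtain ⟨c, hc, sx, hsx, hyeq⟩ := Submodule.mem_sup.mp hy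
    obtain ⟨a, rfl⟩ := Submodule.mem_span_singleton.mp hsx
    apply hByx
    have : B (c + a • x) x = B c x + a * B x x := by
      rw [map_add, LinearMap.add_apply, map_smul, LinearMap.smul_apply]; rfl
    rw [hyeq] at this
    rw [this, hBcx c hc, hBxx]; ring
  have hrank : Module.finrank (ZMod p) C' = Module.finrank (ZMod p) C + 2 := by
    rw [hC', finrank_sup_span p _ y hyCx, finrank_sup_span p C x hxC]
  exact ⟨C', hCC', hleOD, hinf, hrank⟩

section MinSwtLemmas
variable {F : Type} [Field F] {n : ℕ}

lemma minSwt_le {S : Set ((Fin n → F) × (Fin n → F))} {v} (hv : v ∈ S) (h0 : v ≠ 0) :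
    minSwt S ≤ swt v :=
  Nat.sInf_le ⟨v, ⟨hv, by simpa using h0⟩, rfl⟩

lemma minSwt_attained {S : Set ((Fin n → F) × (Fin n → F))} (h : (S \ {0}).Nonempty) :
    ∃ v ∈ S \ {0}, minSwt S = swt v := by
  obtain ⟨v, hv, hveq⟩ := Nat.sInf_mem (h.image swt)
  exact ⟨v, hv, hveq.symm⟩

end MinSwtLemmas

section Dev4
attribute [local instance] ZMod.algebra
open LinearMap Module Submodule

variable (p : ℕ) [Fact p.Prime] {F : Type} [Field F] [Fintype F] [CharP F p] {n : ℕ}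

lemma ds_set_eq (W : Submodule (ZMod p) ((Fin n → F) × (Fin n → F))) :
    (W : Set ((Fin n → F) × (Fin n → F))) ∩ sympDual p (W : Set ((Fin n → F) × (Fin n → F))) =
      ((W ⊓ (Bf p).orthogonal W : Submodule (ZMod p) ((Fin n → F) × (Fin n → F))) :
        Set ((Fin n → F) × (Fin n → F))) := by
  rw [sympDual_coe, ← Submodule.coe_inf]

end Dev4


section Main
attribute [local instance] ZMod.algebra
open LinearMap Module Submodule

/-- Trading subsystem dimension for co-subsystem dimension.
If there exists an `((n,K,R,d))_q` Clifford subsystem code with `K > p` that is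
pure to `d'`, then there exists an `((n, K/p, pR, d_m))_q` Clifford subsystem
code with `d_m ≥ d` that is pure to `min{d, d'}`.  Moreover, if a pure
`((n,p,R,d))_q` Clifford subsystem code exists, then there exists an
`((n,1,pR,d))_q` Clifford subsystem code. -/
theorem trade_subsystem_for_cosubsystem
    (p : ℕ) (hp : p.Prime) (F : Type) [Field F] [Fintype F] [CharP F p]
    (n K R d d' : ℕ) :
    ((p < K ∧ ∃ C : AddSubgroup ((Fin n → F) × (Fin n → F)),
        IsSubsysCode p C K R d ∧ PureTo C d') →
      ∃ dm : ℕ, d ≤ dm ∧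
        ∃ C : AddSubgroup ((Fin n → F) × (Fin n → F)),
          IsSubsysCode p C (K / p) (p * R) dm ∧ PureTo C (min d d')) ∧
    ((∃ C : AddSubgroup ((Fin n → F) × (Fin n → F)),
        IsSubsysCode p C p R d ∧ PureTo C d) →
      ∃ C : AddSubgroup ((Fin n → F) × (Fin n → F)),
        IsSubsysCode p C 1 (p * R) d) := by
  haveI := Fact.mk hp
  have hp2 : 2 ≤ p := hp.two_le
  constructor
  · -- Part 1
    rintro ⟨hK, C, hC, hpure⟩
    obtain ⟨h1, h2, -, h4⟩ := hC
    set Q := Fintype.card F ^ n with hQ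
    have hQpos : 0 < Q := pow_pos Fintype.card_pos n
    set Cs := AddSubgroup.toZModSubmodule p C with hCsdef
    have hCsSet : (Cs : Set ((Fin n → F) × (Fin n → F))) = ↑C := AddSubgroup.coe_toZModSubmodule p C
    set D := Cs ⊓ (Bf p).orthogonal Cs with hD
    have hDs : (↑C : Set ((Fin n → F) × (Fin n → F))) ∩ sympDual p ↑C = ↑D := by
      rw [← hCsSet, ds_set_eq]
    rw [hDs, card_coe_set] at h1
    rw [hDs] at h4
    have hRpos : 0 < R := by
      rcases Nat.eq_zero_or_pos R with h | h
      · exfalso; rw [h, Nat.mul_zero, Nat.mul_zero] at h1; omega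
      · exact h
    haveI : Nonempty ↥Cs := ⟨⟨0, Cs.zero_mem⟩⟩
    haveI : Nonempty ↥D := ⟨⟨0, D.zero_mem⟩⟩
    have hcCpos : 0 < Nat.card Cs := Nat.card_pos
    have hcDpos : 0 < Nat.card D := Nat.card_pos
    have hcC2 : Nat.card Cs * K = Q * R := h2
    have e2 : (K * K * Nat.card D * Nat.card Cs) * R = (Q * Q) * R := by
      calc (K * K * Nat.card D * Nat.card Cs) * R
          = (Nat.card D * (K * R)) * (Nat.card Cs * K) := by ring
        _ = Q * (Q * R) := by rw [h1, hcC2]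
        _ = (Q * Q) * R := by ring
    have e3 : K * K * Nat.card D * Nat.card Cs = Q * Q :=
      Nat.eq_of_mul_eq_mul_right hRpos e2
    have e4 : Nat.card Cs * Nat.card ((Bf p).orthogonal Cs) = Q * Q := card_mul_card_orth p Cs
    have e5 : Nat.card ((Bf p).orthogonal Cs) = K * K * Nat.card D := by
      apply Nat.eq_of_mul_eq_mul_left hcCpos
      calc Nat.card Cs * Nat.card ((Bf p).orthogonal Cs) = Q * Q := e4
        _ = K * K * Nat.card D * Nat.card Cs := e3.symm
        _ = Nat.card Cs * (K * K * Nat.card D) := by ring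
    have hK2 : 2 ≤ K := by omega
    have horth : ¬ ((Bf p).orthogonal Cs ≤ Cs) := by
      intro hle
      have heq : (Bf p).orthogonal Cs = D := by
        rw [hD]; exact le_antisymm (le_inf hle le_rfl) inf_le_right
      have hceq : Nat.card ((Bf p).orthogonal Cs) = Nat.card D := by rw [heq]
      rw [e5] at hceq
      have hge : 2 * 2 * Nat.card D ≤ K * K * Nat.card D :=
        Nat.mul_le_mul_right _ (Nat.mul_le_mul hK2 hK2)
      omega
    obtain ⟨C', hCC', hleOD, hinf, hrank⟩ := key_construction p Cs horth
    rw [← hD] at hleOD hinf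
    -- K is a power of p
    have hKdvd : K ∣ p ^ (Module.finrank (ZMod p) ((Fin n → F) × (Fin n → F))) := by
      rw [pow_finrank_V]
      exact ⟨K * Nat.card D * Nat.card Cs, by rw [← e3]; ring⟩
    obtain ⟨a, haN, hKa⟩ := (Nat.dvd_prime_pow hp).mp hKdvd
    have ha2 : 2 ≤ a := by
      rcases Nat.lt_or_ge a 2 with h | h
      · exfalso
        interval_cases a
        · rw [pow_zero] at hKa; omega
        · rw [pow_one] at hKa; omega
      · exact h
    have hk1 : p ^ (a - 1) * p = K := by
      rw [← pow_succ, Nat.sub_add_cancel (by omega : 1 ≤ a), hKa]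
    have hKdivp : K / p = p ^ (a - 1) := by
      rw [← hk1, Nat.mul_div_cancel _ hp.pos]
    have hcC' : Nat.card C' = p ^ 2 * Nat.card Cs := by
      rw [card_submodule, card_submodule, hrank, pow_add, mul_comm]
    have e6 : Nat.card D * Nat.card ((Bf p).orthogonal D) = Q * Q := card_mul_card_orth p D
    have e7 : Nat.card ((Bf p).orthogonal D) = K * K * Nat.card Cs := by
      apply Nat.eq_of_mul_eq_mul_left hcDpos
      calc Nat.card D * Nat.card ((Bf p).orthogonal D) = Q * Q := e6
        _ = K * K * Nat.card D * Nat.card Cs := e3.symm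
        _ = Nat.card D * (K * K * Nat.card Cs) := by ring
    have hpa : Nat.card ((Bf p).orthogonal D) ≠ Nat.card C' := by
      rw [e7, hcC', hKa]
      intro hcontra
      rw [← pow_add] at hcontra
      have hpow : p ^ (a + a) = p ^ 2 := Nat.eq_of_mul_eq_mul_right hcCpos hcontra
      have := Nat.pow_right_injective hp2 hpow
      omega
    have hOD_ne_C' : (((Bf p).orthogonal D : Set ((Fin n → F) × (Fin n → F)))) ≠ ((C' : Set ((Fin n → F) × (Fin n → F)))) := by
      intro hEq
      exact hpa (by rw [← card_coe_set p ((Bf p).orthogonal D), hEq, card_coe_set])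
    have hsd : sympDual p (D : Set ((Fin n → F) × (Fin n → F))) = ((Bf p).orthogonal D : Set ((Fin n → F) × (Fin n → F))) := sympDual_coe p D
    have horig_ne : sympDual p (D : Set ((Fin n → F) × (Fin n → F))) ≠ (↑C : Set ((Fin n → F) × (Fin n → F))) := by
      rw [hsd, ← hCsSet]
      intro hEq
      have hcr : Nat.card ((Bf p).orthogonal D) = Nat.card Cs := by
        rw [← card_coe_set p ((Bf p).orthogonal D), hEq, card_coe_set]
      rw [e7] at hcr
      have hge : 2 * 2 * Nat.card Cs ≤ K * K * Nat.card Cs :=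
        Nat.mul_le_mul_right _ (Nat.mul_le_mul hK2 hK2)
      omega
    have hd : d = minSwt (sympDual p (D : Set ((Fin n → F) × (Fin n → F))) \ ↑C) := h4 horig_ne
    have hltOD : C' < (Bf p).orthogonal D :=
      lt_of_le_of_ne hleOD (fun h => hOD_ne_C' (by rw [h]))
    obtain ⟨v, hvO, hvC'⟩ := SetLike.exists_of_lt hltOD
    have hv0 : v ≠ 0 := fun h => hvC' (h ▸ C'.zero_mem)
    have hne : ((sympDual p (D : Set ((Fin n → F) × (Fin n → F))) \ (C' : Set ((Fin n → F) × (Fin n → F)))) \ {0}).Nonempty := by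
      refine ⟨v, ⟨⟨?_, hvC'⟩, ?_⟩⟩
      · rw [hsd]; exact hvO
      · simpa using hv0
    set dm := minSwt (sympDual p (D : Set ((Fin n → F) × (Fin n → F))) \ (C' : Set ((Fin n → F) × (Fin n → F)))) with hdm
    obtain ⟨w, hw, hwval⟩ := minSwt_attained hne
    have hw0 : w ≠ 0 := by have := hw.2; simpa using this
    have hd_le : d ≤ dm := by
      rw [hdm, hwval, hd]
      apply minSwt_le _ hw0
      refine ⟨hw.1.1, fun hwC => hw.1.2 (hCC' hwC)⟩
    have hsets : ((C'.toAddSubgroup : Set ((Fin n → F) × (Fin n → F)))) ∩ sympDual p (C'.toAddSubgroup : Set ((Fin n → F) × (Fin n → F))) = ↑D := by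
      rw [Submodule.coe_toAddSubgroup, ds_set_eq p C', hinf]
    refine ⟨dm, hd_le, C'.toAddSubgroup, ⟨?_, ?_, ?_, ?_⟩, ?_⟩
    · rw [hsets, card_coe_set, hKdivp]
      calc Nat.card D * (p ^ (a - 1) * (p * R)) = Nat.card D * ((p ^ (a - 1) * p) * R) := by ring
        _ = Nat.card D * (K * R) := by rw [hk1]
        _ = Q := h1
    · have hcards : Nat.card C'.toAddSubgroup = Nat.card C' := rfl
      rw [hcards, hcC', hKdivp]
      calc p ^ 2 * Nat.card Cs * p ^ (a - 1) = p * (Nat.card Cs * (p ^ (a - 1) * p)) := by ring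
        _ = p * (Nat.card Cs * K) := by rw [hk1]
        _ = p * (Q * R) := by rw [hcC2]
        _ = Q * (p * R) := by ring
    · intro hEq
      exfalso
      rw [hsets, hsd, Submodule.coe_toAddSubgroup] at hEq
      exact hOD_ne_C' hEq
    · intro _
      rw [hsets, Submodule.coe_toAddSubgroup]
    · intro u hu hu0
      by_cases huC : u ∈ C
      · exact le_trans (min_le_right d d') (hpure u huC hu0)
      · refine le_trans (min_le_left d d') ?_
        rw [hd]
        apply minSwt_le _ hu0
        refine ⟨?_, huC⟩
        rw [hsd]
        exact hleOD hu
  · -- Part 2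
    rintro ⟨C, hC, hpure⟩
    obtain ⟨h1, h2, -, h4⟩ := hC
    set Q := Fintype.card F ^ n with hQ
    have hQpos : 0 < Q := pow_pos Fintype.card_pos n
    set Cs := AddSubgroup.toZModSubmodule p C with hCsdef
    have hCsSet : (Cs : Set ((Fin n → F) × (Fin n → F))) = ↑C := AddSubgroup.coe_toZModSubmodule p C
    set D := Cs ⊓ (Bf p).orthogonal Cs with hD
    have hDs : (↑C : Set ((Fin n → F) × (Fin n → F))) ∩ sympDual p ↑C = ↑D := by
      rw [← hCsSet, ds_set_eq]
    rw [hDs, card_coe_set] at h1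
    rw [hDs] at h4
    have hRpos : 0 < R := by
      rcases Nat.eq_zero_or_pos R with h | h
      · exfalso; rw [h, Nat.mul_zero, Nat.mul_zero] at h1; omega
      · exact h
    haveI : Nonempty ↥Cs := ⟨⟨0, Cs.zero_mem⟩⟩
    haveI : Nonempty ↥D := ⟨⟨0, D.zero_mem⟩⟩
    have hcCpos : 0 < Nat.card Cs := Nat.card_pos
    have hcDpos : 0 < Nat.card D := Nat.card_pos
    have hcC2 : Nat.card Cs * p = Q * R := h2
    have e2 : (p * p * Nat.card D * Nat.card Cs) * R = (Q * Q) * R := by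
      calc (p * p * Nat.card D * Nat.card Cs) * R
          = (Nat.card D * (p * R)) * (Nat.card Cs * p) := by ring
        _ = Q * (Q * R) := by rw [h1, hcC2]
        _ = (Q * Q) * R := by ring
    have e3 : p * p * Nat.card D * Nat.card Cs = Q * Q :=
      Nat.eq_of_mul_eq_mul_right hRpos e2
    have e4 : Nat.card Cs * Nat.card ((Bf p).orthogonal Cs) = Q * Q := card_mul_card_orth p Cs
    have e5 : Nat.card ((Bf p).orthogonal Cs) = p * p * Nat.card D := by
      apply Nat.eq_of_mul_eq_mul_left hcCpos
      calc Nat.card Cs * Nat.card ((Bf p).orthogonal Cs) = Q * Q := e4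
        _ = p * p * Nat.card D * Nat.card Cs := e3.symm
        _ = Nat.card Cs * (p * p * Nat.card D) := by ring
    have horth : ¬ ((Bf p).orthogonal Cs ≤ Cs) := by
      intro hle
      have heq : (Bf p).orthogonal Cs = D := by
        rw [hD]; exact le_antisymm (le_inf hle le_rfl) inf_le_right
      have hceq : Nat.card ((Bf p).orthogonal Cs) = Nat.card D := by rw [heq]
      rw [e5] at hceq
      have hge : 2 * 2 * Nat.card D ≤ p * p * Nat.card D :=
        Nat.mul_le_mul_right _ (Nat.mul_le_mul hp2 hp2)
      omega
    obtain ⟨C', hCC', hleOD, hinf, hrank⟩ := key_construction p Cs horth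
    rw [← hD] at hleOD hinf
    have hcC' : Nat.card C' = p ^ 2 * Nat.card Cs := by
      rw [card_submodule, card_submodule, hrank, pow_add, mul_comm]
    have e6 : Nat.card D * Nat.card ((Bf p).orthogonal D) = Q * Q := card_mul_card_orth p D
    have e7 : Nat.card ((Bf p).orthogonal D) = p * p * Nat.card Cs := by
      apply Nat.eq_of_mul_eq_mul_left hcDpos
      calc Nat.card D * Nat.card ((Bf p).orthogonal D) = Q * Q := e6
        _ = p * p * Nat.card D * Nat.card Cs := e3.symm
        _ = Nat.card D * (p * p * Nat.card Cs) := by ring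
    -- C' = orthogonal D
    have hcards_eq : Nat.card ((Bf p).orthogonal D) = Nat.card C' := by
      rw [e7, hcC']; ring
    have hfr : Module.finrank (ZMod p) ((Bf p).orthogonal D) ≤ Module.finrank (ZMod p) C' := by
      have := hcards_eq
      rw [card_submodule, card_submodule] at this
      exact le_of_eq (Nat.pow_right_injective hp2 this)
    have hC'OD : C' = (Bf p).orthogonal D := Submodule.eq_of_le_of_finrank_le hleOD hfr
    have hsd : sympDual p (D : Set ((Fin n → F) × (Fin n → F))) = ((Bf p).orthogonal D : Set ((Fin n → F) × (Fin n → F))) := sympDual_coe p D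
    have horig_ne : sympDual p (D : Set ((Fin n → F) × (Fin n → F))) ≠ (↑C : Set ((Fin n → F) × (Fin n → F))) := by
      rw [hsd, ← hCsSet]
      intro hEq
      have hcr : Nat.card ((Bf p).orthogonal D) = Nat.card Cs := by
        rw [← card_coe_set p ((Bf p).orthogonal D), hEq, card_coe_set]
      rw [e7] at hcr
      have hge : 2 * 2 * Nat.card Cs ≤ p * p * Nat.card Cs :=
        Nat.mul_le_mul_right _ (Nat.mul_le_mul hp2 hp2)
      omega
    have hd : d = minSwt (sympDual p (D : Set ((Fin n → F) × (Fin n → F))) \ ↑C) := h4 horig_ne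
    -- existence of element of orth D not in C
    have hltOD : Cs < (Bf p).orthogonal D := by
      refine lt_of_le_of_ne (le_trans hCC' (le_of_eq hC'OD)) ?_
      intro hEq
      have hcr : Nat.card Cs = Nat.card ((Bf p).orthogonal D) := by rw [hEq]
      rw [e7] at hcr
      have hge : 2 * 2 * Nat.card Cs ≤ p * p * Nat.card Cs :=
        Nat.mul_le_mul_right _ (Nat.mul_le_mul hp2 hp2)
      omega
    obtain ⟨v, hvO, hvC⟩ := SetLike.exists_of_lt hltOD
    have hv0 : v ≠ 0 := fun h => hvC (h ▸ Cs.zero_mem)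
    have hneS : ((sympDual p (D : Set ((Fin n → F) × (Fin n → F))) \ (↑C : Set ((Fin n → F) × (Fin n → F)))) \ {0}).Nonempty := by
      refine ⟨v, ⟨⟨?_, hvC⟩, ?_⟩⟩
      · rw [hsd]; exact hvO
      · simpa using hv0
    have hneT : ((sympDual p (D : Set ((Fin n → F) × (Fin n → F)))) \ {0}).Nonempty := by
      refine ⟨v, ⟨?_, ?_⟩⟩
      · rw [hsd]; exact hvO
      · simpa using hv0
    have hdval : d = minSwt (sympDual p (D : Set ((Fin n → F) × (Fin n → F)))) := by
      obtain ⟨w, hw, hwval⟩ := minSwt_attained hneS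
      have hw0 : w ≠ 0 := by have := hw.2; simpa using this
      obtain ⟨u, hu, huval⟩ := minSwt_attained hneT
      have hu0 : u ≠ 0 := by have := hu.2; simpa using this
      apply le_antisymm
      · -- d ≤ minSwt T
        rw [huval]
        by_cases huC : u ∈ C
        · exact hpure u huC hu0
        · rw [hd]
          exact minSwt_le ⟨hu.1, huC⟩ hu0
      · -- minSwt T ≤ d
        rw [hd, hwval]
        exact minSwt_le hw.1.1 hw0
    have hsets : ((C'.toAddSubgroup : Set ((Fin n → F) × (Fin n → F)))) ∩ sympDual p (C'.toAddSubgroup : Set ((Fin n → F) × (Fin n → F))) = ↑D := by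
      rw [Submodule.coe_toAddSubgroup, ds_set_eq p C', hinf]
    have hsdC' : sympDual p (D : Set ((Fin n → F) × (Fin n → F))) = (C'.toAddSubgroup : Set ((Fin n → F) × (Fin n → F))) := by
      rw [hsd, Submodule.coe_toAddSubgroup, hC'OD]
    refine ⟨C'.toAddSubgroup, ?_, ?_, ?_, ?_⟩
    · rw [hsets, card_coe_set, one_mul]
      exact h1
    · have hcards : Nat.card C'.toAddSubgroup = Nat.card C' := rfl
      rw [hcards, hcC', mul_one]
      calc p ^ 2 * Nat.card Cs = p * (Nat.card Cs * p) := by ring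
        _ = p * (Q * R) := by rw [hcC2]
        _ = Q * (p * R) := by ring
    · intro _
      rw [hsets]
      exact hdval
    · intro hne
      exfalso
      rw [hsets] at hne
      exact hne hsdC'
end Main
end Dev3
end

section
/- Extension of additive codes commutes with trace-symplectic duality: Let q be a power of a prime p and let X ⊆ F_q^{2n} be an additive (F_p-linear) code. Define X' ⊆ F_q^{2(n+1)} by X' = {(a_1,...,a_n,α | b_1,...,b_n,0) : (a|b) ∈ X, α ∈ F_q}. Then |X'| = q·|X| and (X')^⊥s = (X^⊥s)', where the trace-symplectic duals are taken in F_q^{2n} and F_q^{2(n+1)} respectively. -/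
open Finset

/-- Extension of a code in `F_q^{2n}` to `F_q^{2(n+1)}`:
`X' = {(a_1,…,a_n,α | b_1,…,b_n,0) : (a|b) ∈ X, α ∈ F_q}`. -/
def extendCode {F : Type} [Field F] {n : ℕ} (X : Set ((Fin n → F) × (Fin n → F))) :
    Set ((Fin (n + 1) → F) × (Fin (n + 1) → F)) :=
  {v | ∃ w ∈ X, ∃ α : F, v = (Fin.snoc w.1 α, Fin.snoc w.2 0)}

lemma key_sum {F : Type} [Field F] {n : ℕ} (v : (Fin (n+1) → F) × (Fin (n+1) → F))
    (w1 w2 : Fin n → F) (α : F) :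
    ∑ i : Fin (n+1), ((Fin.snoc w1 α : Fin (n+1) → F) i * v.2 i -
        v.1 i * (Fin.snoc w2 0 : Fin (n+1) → F) i)
      = (∑ i : Fin n, (w1 i * Fin.init v.2 i - Fin.init v.1 i * w2 i))
        + α * v.2 (Fin.last n) := by
  rw [Fin.sum_univ_castSucc]
  simp [Fin.init]

lemma tr_nondeg (p : ℕ) (hp : p.Prime) (F : Type) [Field F] [Fintype F] [CharP F p]
    (c : F) (h : ∀ α : F, (letI := ZMod.algebra F p;
      Algebra.trace (ZMod p) F (α * c)) = 0) : c = 0 := by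
  haveI := Fact.mk hp
  letI := ZMod.algebra F p
  have htr := (traceForm_nondegenerate (ZMod p) F).1 c
  simp_rw [Algebra.traceForm_apply] at htr
  apply htr
  intro m; rw [mul_comm]; exact h m

/-- Extension of additive codes commutes with trace-symplectic
duality.  For an additive code `X ⊆ F_q^{2n}`, one has `|X'| = q·|X|` and
`(X')^⊥s = (X^⊥s)'`. -/
theorem extension_commutes_with_symplectic_duality
    (p : ℕ) (hp : p.Prime) (F : Type) [Field F] [Fintype F] [CharP F p]
    (n : ℕ) (X : AddSubgroup ((Fin n → F) × (Fin n → F))) :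
    Nat.card (extendCode (X : Set ((Fin n → F) × (Fin n → F)))) =
      Fintype.card F * Nat.card X ∧
    sympDual p (extendCode (X : Set ((Fin n → F) × (Fin n → F)))) =
      extendCode (sympDual p (X : Set ((Fin n → F) × (Fin n → F)))) := by
  haveI := Fact.mk hp
  letI := ZMod.algebra F p
  constructor
  · have hb : Function.Bijective (fun wα : (↥X × F) =>
        (⟨(Fin.snoc wα.1.1.1 wα.2, Fin.snoc wα.1.1.2 0), wα.1.1, wα.1.2, wα.2, rfl⟩ :
          extendCode (X : Set ((Fin n → F) × (Fin n → F))))) := by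
      constructor
      · rintro ⟨⟨w, hw⟩, α⟩ ⟨⟨w', hw'⟩, α'⟩ h
        simp only [Subtype.mk.injEq, Prod.mk.injEq] at h
        obtain ⟨h1, h2⟩ := Prod.mk.inj (congrArg Subtype.val h)
        have hα : α = α' := by
          have := congrFun h1 (Fin.last n); simpa using this
        have hw1 : w.1 = w'.1 := by
          have := congrArg Fin.init h1; simpa using this
        have hw2 : w.2 = w'.2 := by
          have := congrArg Fin.init h2; simpa using this
        exact Prod.ext (Subtype.ext (Prod.ext hw1 hw2)) hα
      · rintro ⟨v, w, hw, α, rfl⟩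
        exact ⟨⟨⟨w, hw⟩, α⟩, rfl⟩
    have hc := Nat.card_eq_of_bijective _ hb
    rw [← hc, Nat.card_prod, Nat.card_eq_fintype_card (α := F), mul_comm]
  · ext v
    constructor
    · intro hv
      have h0 : v.2 (Fin.last n) = 0 := by
        apply tr_nondeg p hp F
        intro α
        have := hv (Fin.snoc (0 : Fin n → F) α, Fin.snoc (0 : Fin n → F) 0)
          ⟨0, X.zero_mem, α, rfl⟩
        simp only [trSympForm] at this ⊢
        rw [key_sum v 0 0 α] at this
        simpa using this
      refine ⟨(Fin.init v.1, Fin.init v.2), ?_, v.1 (Fin.last n), ?_⟩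
      · intro w hw
        have := hv (Fin.snoc w.1 0, Fin.snoc w.2 0) ⟨w, hw, 0, rfl⟩
        simp only [trSympForm] at this ⊢
        rw [key_sum v w.1 w.2 0] at this
        simpa using this
      · have e1 : Fin.snoc (Fin.init v.1) (v.1 (Fin.last n)) = v.1 := Fin.snoc_init_self v.1
        have e2 : Fin.snoc (Fin.init v.2) (0 : F) = v.2 := by
          rw [← h0]; exact Fin.snoc_init_self v.2
        exact Prod.ext e1.symm e2.symm
    · rintro ⟨u, hu, β, rfl⟩ w' ⟨w, hw, α, rfl⟩
      have := hu w hw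
      simp only [trSympForm] at this ⊢
      rw [key_sum (Fin.snoc u.1 β, Fin.snoc u.2 0) w.1 w.2 α]
      simpa [Fin.init_snoc] using this
end
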